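/- arXiv:math/0409053 — 6 statements merged into one kernel-verified Lean document; each statement's English description precedes it below -/
import Mathlib

section
/- Let g be a Lie algebra over a field F of characteristic zero. Equip the full linear dual U(g)* of the universal enveloping algebra U(g) with the commutative convolution product (h·h')(x) := (h⊗h')(Δ(x)) and unit ε, where Δ: U(g) → U(g)⊗U(g) is the algebra homomorphism determined by Δ(x) = 1⊗x + x⊗1 for x ∈ g and ε: U(g) → F is the algebra homomorphism determined by ε(x) = 0 for x ∈ g. Then the algebra U(g)* has no zero divisors. -/
open TensorProduct

namespace StmtZeroAux

open Finset Pointwise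

section Expand
variable {A : Type*} [Ring A]

theorem sum_pow_expand {ι : Type*} [DecidableEq ι] (s : Finset ι) (b : ι → A) (k : ℕ) :
    (∑ i ∈ s, b i) ^ k =
      ∑ f ∈ Fintype.piFinset (fun _ : Fin k => s), (List.ofFn fun j => b (f j)).prod := by
  induction k with
  | zero =>
      simp only [pow_zero, List.ofFn_zero, List.prod_nil]
      rw [Finset.sum_const]
      rw [Fintype.card_piFinset]
      simp
  | succ k ih =>
      rw [pow_succ, ih, Finset.sum_mul_sum]
      rw [← Finset.sum_product']
      refine Finset.sum_bij' (fun p _ => Fin.snoc p.1 p.2)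
        (fun f _ => (Fin.init f, f (Fin.last k))) ?_ ?_ ?_ ?_ ?_
      · rintro ⟨f, i⟩ hp
        simp only [Finset.mem_product, Fintype.mem_piFinset] at hp ⊢
        intro a
        induction a using Fin.lastCases with
        | last => simpa [Fin.snoc_last] using hp.2
        | cast a => simpa [Fin.snoc_castSucc] using hp.1 a
      · intro f hf
        simp only [Fintype.mem_piFinset] at hf
        simp only [Finset.mem_product, Fintype.mem_piFinset]
        exact ⟨fun a => hf _, hf _⟩
      · rintro ⟨f, i⟩ _
        simp [Fin.init_snoc, Fin.snoc_last]
      · intro f _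
        simp [Fin.snoc_init_self]
      · rintro ⟨f, i⟩ _
        rw [List.ofFn_succ']
        simp [Fin.snoc_castSucc, Fin.snoc_last]

theorem inner_ie {k : ℕ} (T : Finset (Fin k)) :
    (∑ S ∈ (Finset.univ : Finset (Fin k)).powerset.filter (fun S => T ⊆ S),
      ((-1 : ℤ)) ^ (k - S.card)) = if T = Finset.univ then 1 else 0 := by
  classical
  rw [Finset.sum_nbij' (i := fun S => Sᶜ) (j := fun S => Sᶜ) (t := Tᶜ.powerset)
    (g := fun S => ((-1 : ℤ)) ^ S.card)]
  · rw [Finset.sum_powerset_neg_one_pow_card]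
    congr 1
    simp [Finset.compl_eq_empty_iff]
  · intro S hS
    simp only [Finset.mem_filter, Finset.mem_powerset] at hS
    simpa [Finset.subset_compl_comm] using hS.2
  · intro S hS
    simp only [Finset.mem_powerset] at hS
    simp only [Finset.mem_filter, Finset.mem_powerset]
    exact ⟨Finset.subset_univ _, by rwa [← Finset.subset_compl_comm]⟩
  · intro S _; simp
  · intro S _; simp
  · intro S hS
    congr 1
    rw [Finset.card_compl]
    simp

theorem polarization (k : ℕ) (a : Fin k → A) :
    ∑ S ∈ (Finset.univ : Finset (Fin k)).powerset,
        (-1 : ℤ) ^ (k - S.card) • (∑ i ∈ S, a i) ^ k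
      = ∑ f ∈ Finset.univ.filter (fun f : Fin k → Fin k => Function.Bijective f),
          (List.ofFn fun j => a (f j)).prod := by
  classical
  have step1 : ∀ S : Finset (Fin k),
      (∑ i ∈ S, a i) ^ k = ∑ f : Fin k → Fin k,
        if (∀ j, f j ∈ S) then (List.ofFn fun j => a (f j)).prod else 0 := by
    intro S
    rw [sum_pow_expand]
    rw [← Finset.sum_filter]
    congr 1
    ext f
    simp [Fintype.mem_piFinset]
  simp_rw [step1, Finset.smul_sum]
  rw [Finset.sum_comm]
  have step2 : ∀ f : Fin k → Fin k,
      (∑ S ∈ (Finset.univ : Finset (Fin k)).powerset,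
        (-1 : ℤ) ^ (k - S.card) • (if (∀ j, f j ∈ S) then (List.ofFn fun j => a (f j)).prod else 0))
      = (if Finset.image f Finset.univ = Finset.univ then 1 else 0 : ℤ) •
          (List.ofFn fun j => a (f j)).prod := by
    intro f
    rw [← inner_ie (Finset.image f Finset.univ), Finset.sum_smul]
    rw [← Finset.sum_filter_add_sum_filter_not _ (fun S => Finset.image f Finset.univ ⊆ S)]
    have h2 : ∀ S ∈ (Finset.univ : Finset (Fin k)).powerset.filter
        (fun S => ¬ Finset.image f Finset.univ ⊆ S),
        (-1 : ℤ) ^ (k - S.card) • (if (∀ j, f j ∈ S) then (List.ofFn fun j => a (f j)).prod else 0) = 0 := by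
      intro S hS
      simp only [Finset.mem_filter] at hS
      rw [if_neg, smul_zero]
      intro hall
      exact hS.2 (Finset.image_subset_iff.2 fun x _ => hall x)
    rw [Finset.sum_eq_zero h2, add_zero]
    refine Finset.sum_congr rfl fun S hS => ?_
    simp only [Finset.mem_filter] at hS
    rw [if_pos fun j => hS.2 (Finset.mem_image_of_mem f (Finset.mem_univ j))]
  simp_rw [step2]
  simp_rw [ite_smul, one_smul, zero_smul]
  rw [← Finset.sum_filter]
  refine Finset.sum_congr ?_ (fun _ _ => rfl)
  ext f
  simp only [Finset.mem_filter, Finset.mem_univ, true_and]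
  constructor
  · intro hsurj
    have : Function.Surjective f := by
      intro y
      have := (Finset.eq_univ_iff_forall.1 hsurj) y
      simpa [Finset.mem_image] using this
    exact Finite.surjective_iff_bijective.1 this
  · intro hbij
    exact Finset.image_univ_of_surjective hbij.2

end Expand

section Coeffs
variable {F : Type*} [CommRing F] {A : Type*} [Ring A] [Algebra F A]

theorem pow_add_smul_coeffs (x y : A) (k : ℕ) :
    ∃ c : ℕ → A, c 0 = x ^ k ∧ c k = y ^ k ∧
      ∀ s : F, (x + s • y) ^ k = ∑ i ∈ Finset.range (k + 1), s ^ i • c i := by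
  induction k with
  | zero =>
      exact ⟨fun _ => 1, by simp, by simp, fun s => by simp⟩
  | succ k ih =>
      obtain ⟨c, hc0, hck, hsum⟩ := ih
      refine ⟨fun j => (if j < k + 1 then c j * x else 0) +
        (if j = 0 then 0 else c (j - 1) * y), by simp [hc0, pow_succ], by simp [hck, pow_succ], ?_⟩
      intro s
      have : (x + s • y) ^ (k + 1) = ((∑ i ∈ Finset.range (k + 1), s ^ i • c i) * (x + s • y)) := by
        rw [pow_succ, hsum]
      rw [this, Finset.sum_mul]
      have expand : ∀ i, (s ^ i • c i) * (x + s • y)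
          = s ^ i • (c i * x) + s ^ (i + 1) • (c i * y) := by
        intro i
        rw [mul_add, smul_mul_assoc, smul_mul_assoc, mul_smul_comm, smul_smul, pow_succ]
      simp_rw [expand]
      rw [Finset.sum_add_distrib]
      simp_rw [smul_add]
      rw [Finset.sum_add_distrib]
      congr 1
      · rw [Finset.sum_range_succ (n := k + 1)]
        rw [if_neg (lt_irrefl (k+1)), smul_zero, add_zero]
        exact Finset.sum_congr rfl fun i hi => by
          rw [if_pos (Finset.mem_range.1 hi)]
      · rw [Finset.sum_range_succ' _ (k + 1)]
        rw [if_pos rfl, smul_zero, add_zero]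
        exact Finset.sum_congr rfl fun i _ => by
          rw [if_neg (Nat.succ_ne_zero i), Nat.add_sub_cancel]

end Coeffs


section UEA

variable (F : Type*) [Field F] [CharZero F]
variable (g : Type*) [LieRing g] [LieAlgebra F g]

local notation "𝒰" => UniversalEnvelopingAlgebra F g

/-- The span of the image of `g` in its universal enveloping algebra. -/
def genV : Submodule F (UniversalEnvelopingAlgebra F g) :=
  Submodule.span F (Set.range fun u : g => (UniversalEnvelopingAlgebra.ι F u : 𝒰))

/-- The first step of the standard filtration of the universal enveloping algebra. -/
def genW : Submodule F (UniversalEnvelopingAlgebra F g) := 1 ⊔ genV F g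

theorem ι_mem_genV (u : g) : (UniversalEnvelopingAlgebra.ι F u : 𝒰) ∈ genV F g :=
  Submodule.subset_span ⟨u, rfl⟩

theorem one_mem_genW : (1 : 𝒰) ∈ genW F g :=
  Submodule.one_le.mp le_sup_left

theorem genV_le_genW : genV F g ≤ genW F g := le_sup_right

theorem pow_le_pow_of_le {M N : Submodule F 𝒰} (hMN : M ≤ N) (k : ℕ) : M ^ k ≤ N ^ k := by
  induction k with
  | zero => simp
  | succ k ih => rw [pow_succ, pow_succ]; exact mul_le_mul' ih hMN

theorem genW_pow_mono {i j : ℕ} (hij : i ≤ j) : genW F g ^ i ≤ genW F g ^ j := by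
  induction j with
  | zero => simpa [Nat.le_zero.mp hij] using le_rfl
  | succ j ih =>
      rcases Nat.lt_or_ge i (j+1) with hlt | hge
      · refine le_trans (ih (Nat.lt_succ_iff.mp hlt)) ?_
        intro x hx
        rw [pow_succ]
        simpa using Submodule.mul_mem_mul hx (one_mem_genW F g)
      · have : i = j + 1 := le_antisymm hij hge
        subst this; exact le_rfl

theorem word_mem_genV_pow (l : List g) :
    (l.map fun u => (UniversalEnvelopingAlgebra.ι F u : 𝒰)).prod ∈ genV F g ^ l.length := by
  induction l with
  | nil =>
      simp only [List.map_nil, List.prod_nil, List.length_nil, pow_zero]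
      exact Submodule.one_le.mp le_rfl
  | cons x l ih =>
      rw [List.map_cons, List.prod_cons, List.length_cons, pow_succ']
      exact Submodule.mul_mem_mul (ι_mem_genV F g x) ih

theorem comm_mem_genV (x y : g) :
    (UniversalEnvelopingAlgebra.ι F x : 𝒰) * UniversalEnvelopingAlgebra.ι F y -
      UniversalEnvelopingAlgebra.ι F y * UniversalEnvelopingAlgebra.ι F x ∈ genV F g := by
  letI : LieRing 𝒰 := LieRing.ofAssociativeRing
  have := (UniversalEnvelopingAlgebra.ι F (L := g)).map_lie (x := x) (y := y)
  rw [Ring.lie_def] at this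
  rw [← this]
  exact ι_mem_genV F g _

theorem perm_congr_mem {l l' : List g} (hp : l.Perm l') :
    (l.map fun u => (UniversalEnvelopingAlgebra.ι F u : 𝒰)).prod -
      (l'.map fun u => (UniversalEnvelopingAlgebra.ι F u : 𝒰)).prod
        ∈ genW F g ^ (l.length - 1) := by
  induction hp with
  | nil => simpa using Submodule.zero_mem _
  | @cons x l₁ l₂ h ih =>
      simp only [List.map_cons, List.prod_cons, List.length_cons, Nat.add_sub_cancel]
      rw [← mul_sub]
      cases l₁ with
      | nil =>
          have : l₂ = [] := h.symm.eq_nil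
          subst this; simpa using Submodule.zero_mem _
      | cons y t =>
          have hlen : (y :: t : List g).length = ((y :: t : List g).length - 1) + 1 := rfl
          rw [hlen, pow_succ']
          exact Submodule.mul_mem_mul (genV_le_genW F g (ι_mem_genV F g x)) ih
  | swap x y l =>
      simp only [List.map_cons, List.prod_cons, List.length_cons, Nat.add_sub_cancel]
      rw [← mul_assoc, ← mul_assoc, ← sub_mul]
      have h1 := comm_mem_genV F g y x
      have h2 := word_mem_genV_pow F g l
      have := Submodule.mul_mem_mul h1 h2
      rw [← pow_succ'] at this
      exact pow_le_pow_of_le F g (genV_le_genW F g) _ this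
  | trans h₁ h₂ ih₁ ih₂ =>
      rw [h₁.length_eq] at ih₁ ⊢
      have hadd := Submodule.add_mem _ ih₁ ih₂
      rwa [sub_add_sub_cancel] at hadd

theorem mem_pow_gen_set {n : ℕ} {x : 𝒰}
    (hx : x ∈ (({1} ∪ Set.range fun u : g => (UniversalEnvelopingAlgebra.ι F u : 𝒰)) ^ n : Set 𝒰)) :
    ∃ l : List g, l.length ≤ n ∧
      (l.map fun u => (UniversalEnvelopingAlgebra.ι F u : 𝒰)).prod = x := by
  induction n generalizing x with
  | zero =>
      refine ⟨[], by simp, ?_⟩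
      simpa using (Set.mem_singleton_iff.mp (by simpa [pow_zero] using hx)).symm
  | succ n ih =>
      rw [pow_succ] at hx
      rcases Set.mem_mul.mp hx with ⟨y, hy, z, hz, rfl⟩
      rcases ih hy with ⟨l, hl, rfl⟩
      rcases hz with hz | ⟨u, rfl⟩
      · exact ⟨l, le_trans hl (Nat.le_succ n), by simp [Set.mem_singleton_iff.mp hz]⟩
      · exact ⟨l ++ [u], by simpa using hl, by simp⟩

theorem genW_pow_le_span (n : ℕ) :
    genW F g ^ n ≤ Submodule.span F
      {x : 𝒰 | ∃ l : List g, l.length ≤ n ∧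
        (l.map fun u => (UniversalEnvelopingAlgebra.ι F u : 𝒰)).prod = x} := by
  have hW : genW F g = Submodule.span F
      ({1} ∪ Set.range fun u : g => (UniversalEnvelopingAlgebra.ι F u : 𝒰)) := by
    rw [Submodule.span_union, genW, genV, Submodule.one_eq_span]
  rw [hW, Submodule.span_pow]
  refine Submodule.span_le.mpr ?_
  intro x hx
  exact Submodule.subset_span (mem_pow_gen_set F g hx)

theorem exists_genW_pow_mem (x : 𝒰) : ∃ n, x ∈ genW F g ^ n := by
  obtain ⟨y, rfl⟩ : ∃ y, UniversalEnvelopingAlgebra.mkAlgHom F g y = x :=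
    (UniversalEnvelopingAlgebra.ringCon F g).mk'_surjective x
  induction y using TensorAlgebra.induction with
  | algebraMap r =>
      refine ⟨0, ?_⟩
      rw [AlgHom.commutes, pow_zero, Algebra.algebraMap_eq_smul_one]
      exact Submodule.smul_mem _ _ (Submodule.one_le.mp le_rfl)
  | ι x =>
      refine ⟨1, ?_⟩
      rw [pow_one]
      exact genV_le_genW F g (ι_mem_genV F g x)
  | mul a b iha ihb =>
      obtain ⟨p, hp⟩ := iha; obtain ⟨q, hq⟩ := ihb
      refine ⟨p + q, ?_⟩
      rw [map_mul, pow_add]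
      exact Submodule.mul_mem_mul hp hq
  | add a b iha ihb =>
      obtain ⟨p, hp⟩ := iha; obtain ⟨q, hq⟩ := ihb
      refine ⟨max p q, ?_⟩
      rw [map_add]
      exact Submodule.add_mem _ (genW_pow_mono F g (le_max_left p q) hp)
        (genW_pow_mono F g (le_max_right p q) hq)



theorem h_kills_word (h : Module.Dual F 𝒰) (l : List g)
    (hlow : ∀ i < l.length, ∀ x ∈ genW F g ^ i, h x = 0)
    (hpows : ∀ z : g, h ((UniversalEnvelopingAlgebra.ι F z : 𝒰) ^ l.length) = 0) :
    h ((l.map fun u => (UniversalEnvelopingAlgebra.ι F u : 𝒰)).prod) = 0 := by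
  classical
  cases hl : l with
  | nil =>
      rw [hl] at hpows
      have h1 := hpows 0
      rw [List.length_nil, pow_zero] at h1
      simpa using h1
  | cons y t =>
  rw [← hl]
  have hk1 : 1 ≤ l.length := by rw [hl]; exact Nat.succ_le_succ (Nat.zero_le _)
  set k := l.length with hk
  have hpol := polarization (k := k) (a := fun i => (UniversalEnvelopingAlgebra.ι F (l.get (Fin.cast hk i)) : 𝒰))
  have hLHS : h (∑ S ∈ (Finset.univ : Finset (Fin k)).powerset,
      (-1 : ℤ) ^ (k - S.card) •
        (∑ i ∈ S, (UniversalEnvelopingAlgebra.ι F (l.get (Fin.cast hk i)) : 𝒰)) ^ k) = 0 := by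
    rw [map_sum]
    refine Finset.sum_eq_zero fun S _ => ?_
    rw [map_zsmul]
    have hsum : (∑ i ∈ S, (UniversalEnvelopingAlgebra.ι F (l.get (Fin.cast hk i)) : 𝒰))
        = UniversalEnvelopingAlgebra.ι F (∑ i ∈ S, l.get (Fin.cast hk i)) := by
      letI : LieRing 𝒰 := LieRing.ofAssociativeRing
      rw [← LieHom.coe_toLinearMap]
      exact (map_sum _ _ _).symm
    rw [hsum, hpows, smul_zero]
  rw [hpol, map_sum] at hLHS
  -- every bijective word has the same value under h
  have hword : ∀ f ∈ Finset.univ.filter (fun f : Fin k → Fin k => Function.Bijective f),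
      h (List.ofFn fun j => (UniversalEnvelopingAlgebra.ι F (l.get (Fin.cast hk (f j))) : 𝒰)).prod
        = h ((l.map fun u => (UniversalEnvelopingAlgebra.ι F u : 𝒰)).prod) := by
    intro f hf
    simp only [Finset.mem_filter] at hf
    set σ : Equiv.Perm (Fin k) := Equiv.ofBijective f hf.2 with hσ
    have hperm : (List.ofFn fun j => l.get (Fin.cast hk (f j))).Perm l := by
      have h1 : (List.ofFn fun j => l.get (Fin.cast hk (f j)))
          = List.ofFn ((fun i => l.get (Fin.cast hk i)) ∘ σ) := rfl
      rw [h1]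
      refine (Equiv.Perm.ofFn_comp_perm σ _).trans ?_
      have hofn : (List.ofFn fun i : Fin k => l.get (Fin.cast hk i)) = l := by
        apply List.ext_get (by simp [← hk])
        intro i h1 h2
        simp [List.get_ofFn]
      rw [hofn]
    have hmem := perm_congr_mem F g hperm
    have hlen : (List.ofFn fun j => l.get (Fin.cast hk (f j))).length = k := List.length_ofFn
    rw [hlen] at hmem
    have hmap : ((List.ofFn fun j => l.get (Fin.cast hk (f j))).map
        fun u => (UniversalEnvelopingAlgebra.ι F u : 𝒰))
        = List.ofFn fun j => (UniversalEnvelopingAlgebra.ι F (l.get (Fin.cast hk (f j))) : 𝒰) :=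
      List.map_ofFn
    rw [hmap] at hmem
    have h0 := hlow (k - 1) (by omega) _ hmem
    rw [map_sub] at h0
    exact sub_eq_zero.mp h0
  rw [Finset.sum_congr rfl hword, Finset.sum_const] at hLHS
  have hcard : (Finset.univ.filter (fun f : Fin k → Fin k => Function.Bijective f)).card ≠ 0 := by
    exact Finset.card_ne_zero.mpr ⟨id, Finset.mem_filter.mpr ⟨Finset.mem_univ _, Function.bijective_id⟩⟩
  have := hLHS
  rw [nsmul_eq_mul] at this
  rcases mul_eq_zero.mp this with hc | hval
  · exact absurd (Nat.cast_eq_zero.mp hc) hcard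
  · exact hval
 

theorem exists_pow_witness (h : Module.Dual F 𝒰) (n : ℕ)
    (hlow : ∀ i < n, ∀ x ∈ genW F g ^ i, h x = 0)
    (hne : ∃ x ∈ genW F g ^ n, h x ≠ 0) :
    ∃ z : g, h ((UniversalEnvelopingAlgebra.ι F z : 𝒰) ^ n) ≠ 0 := by
  by_contra hc
  push_neg at hc
  obtain ⟨x, hxW, hx⟩ := hne
  refine hx ?_
  have hle := genW_pow_le_span F g n
  have hker : Submodule.span F {x : 𝒰 | ∃ l : List g, l.length ≤ n ∧
      (l.map fun u => (UniversalEnvelopingAlgebra.ι F u : 𝒰)).prod = x} ≤ LinearMap.ker h := by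
    rw [Submodule.span_le]
    rintro _ ⟨l, hlen, rfl⟩
    simp only [SetLike.mem_coe, LinearMap.mem_ker]
    rcases Nat.lt_or_ge l.length n with hlt | hge
    · exact hlow l.length hlt _
        (pow_le_pow_of_le F g (genV_le_genW F g) l.length (word_mem_genV_pow F g l))
    · have heq : l.length = n := le_antisymm hlen hge
      refine h_kills_word F g h l (fun i hi => hlow i (heq ▸ hi)) (fun z => ?_)
      rw [heq]; exact hc z
  exact LinearMap.mem_ker.mp (hker (hle hxW))

end UEA


end StmtZeroAux

/-- **No zero divisors in `U(g)*`.**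
Let `g` be a Lie algebra over a field `F` of characteristic zero.  Let
`Δ : U(g) → U(g) ⊗ U(g)` be the comultiplication, i.e. the algebra homomorphism determined by
`Δ(x) = 1 ⊗ x + x ⊗ 1` for `x ∈ g`, and let `ε : U(g) → F` be the counit, i.e. the algebra
homomorphism determined by `ε(x) = 0` for `x ∈ g`.  The full dual `U(g)*` is a commutative
algebra with unit `ε` under the convolution product `(h · h')(a) = (h ⊗ h')(Δ(a))`.
Then this algebra has no zero divisors: if the convolution product of `h` and `h'` is zero,
then `h = 0` or `h' = 0`. -/
theorem stmt_0
    (F : Type*) [Field F] [CharZero F]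
    (g : Type*) [LieRing g] [LieAlgebra F g]
    (Δ : UniversalEnvelopingAlgebra F g →ₐ[F]
      (UniversalEnvelopingAlgebra F g ⊗[F] UniversalEnvelopingAlgebra F g))
    (hΔ : ∀ x : g, Δ (UniversalEnvelopingAlgebra.ι F x) =
      1 ⊗ₜ[F] (UniversalEnvelopingAlgebra.ι F x) + (UniversalEnvelopingAlgebra.ι F x) ⊗ₜ[F] 1)
    (ε : UniversalEnvelopingAlgebra F g →ₐ[F] F)
    (hε : ∀ x : g, ε (UniversalEnvelopingAlgebra.ι F x) = 0)
    (h h' : Module.Dual F (UniversalEnvelopingAlgebra F g))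
    (hzero : (TensorProduct.dualDistrib F (UniversalEnvelopingAlgebra F g)
        (UniversalEnvelopingAlgebra F g) (h ⊗ₜ[F] h')) ∘ₗ Δ.toLinearMap = 0) :
    h = 0 ∨ h' = 0 := by
  classical
  open StmtZeroAux in
  by_cases hh : h = 0
  · exact Or.inl hh
  by_cases hh' : h' = 0
  · exact Or.inr hh'
  exfalso
  set 𝒰 := UniversalEnvelopingAlgebra F g with h𝒰
  -- the convolution vanishes pointwise
  have happ : ∀ x : 𝒰, (TensorProduct.dualDistrib F 𝒰 𝒰 (h ⊗ₜ[F] h')) (Δ x) = 0 := by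
    intro x
    have := LinearMap.ext_iff.mp hzero x
    simpa using this
  -- minimal degree for h
  have hPex : ∃ n : ℕ, ∃ x ∈ StmtZeroAux.genW F g ^ n, h x ≠ 0 := by
    obtain ⟨x0, hx0⟩ : ∃ x, h x ≠ 0 := by
      by_contra hcon; push_neg at hcon; exact hh (LinearMap.ext hcon)
    obtain ⟨N0, hN0⟩ := StmtZeroAux.exists_genW_pow_mem F g x0
    exact ⟨N0, x0, hN0, hx0⟩
  have hQex : ∃ m : ℕ, ∃ x ∈ StmtZeroAux.genW F g ^ m, h' x ≠ 0 := by
    obtain ⟨x0, hx0⟩ : ∃ x, h' x ≠ 0 := by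
      by_contra hcon; push_neg at hcon; exact hh' (LinearMap.ext hcon)
    obtain ⟨N0, hN0⟩ := StmtZeroAux.exists_genW_pow_mem F g x0
    exact ⟨N0, x0, hN0, hx0⟩
  set n := Nat.find hPex with hn
  set m := Nat.find hQex with hm
  have hlow : ∀ i < n, ∀ x ∈ StmtZeroAux.genW F g ^ i, h x = 0 := by
    intro i hi x hxW
    by_contra hne
    exact Nat.find_min hPex hi ⟨x, hxW, hne⟩
  have hlow' : ∀ i < m, ∀ x ∈ StmtZeroAux.genW F g ^ i, h' x = 0 := by
    intro i hi x hxW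
    by_contra hne
    exact Nat.find_min hQex hi ⟨x, hxW, hne⟩
  obtain ⟨u, hu⟩ := StmtZeroAux.exists_pow_witness F g h n hlow (Nat.find_spec hPex)
  obtain ⟨v, hv⟩ := StmtZeroAux.exists_pow_witness F g h' m hlow' (Nat.find_spec hQex)
  -- the key product vanishing, for every z
  have hprod : ∀ z : g,
      h ((UniversalEnvelopingAlgebra.ι F z : 𝒰) ^ n) *
        h' ((UniversalEnvelopingAlgebra.ι F z : 𝒰) ^ m) = 0 := by
    intro z
    set a : 𝒰 := UniversalEnvelopingAlgebra.ι F z with ha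
    have hcomm : Commute ((1 : 𝒰) ⊗ₜ[F] a) (a ⊗ₜ[F] (1 : 𝒰)) := by
      show _ = _
      simp [Algebra.TensorProduct.tmul_mul_tmul]
    have hpow : Δ (a ^ (n + m)) = ∑ i ∈ Finset.range (n + m + 1),
        (((1 : 𝒰) ⊗ₜ[F] a) ^ i * (a ⊗ₜ[F] (1 : 𝒰)) ^ (n + m - i) *
          ((n + m).choose i : 𝒰 ⊗[F] 𝒰)) := by
      rw [map_pow, hΔ z, hcomm.add_pow]
    have hterm : ∀ i, ((1 : 𝒰) ⊗ₜ[F] a) ^ i * (a ⊗ₜ[F] (1 : 𝒰)) ^ (n + m - i)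
        = (a ^ (n + m - i)) ⊗ₜ[F] (a ^ i) := by
      intro i
      rw [Algebra.TensorProduct.tmul_pow, Algebra.TensorProduct.tmul_pow,
        Algebra.TensorProduct.tmul_mul_tmul, one_pow, one_pow, one_mul, mul_one]
    have hsum0 : (0 : F) = ∑ i ∈ Finset.range (n + m + 1),
        ((n + m).choose i) • (h (a ^ (n + m - i)) * h' (a ^ i)) := by
      have h1 := happ (a ^ (n + m))
      rw [hpow, map_sum] at h1
      rw [← h1]
      refine Finset.sum_congr rfl fun i _ => ?_
      rw [hterm i]
      have hc : (a ^ (n + m - i)) ⊗ₜ[F] (a ^ i) * ((n + m).choose i : 𝒰 ⊗[F] 𝒰)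
          = ((n + m).choose i) • ((a ^ (n + m - i)) ⊗ₜ[F] (a ^ i)) := by
        rw [← (Nat.cast_commute ((n + m).choose i) ((a ^ (n + m - i)) ⊗ₜ[F] (a ^ i))).eq,
          ← nsmul_eq_mul]
      rw [hc, map_nsmul, TensorProduct.dualDistrib_apply]
    have hsingle : ∑ i ∈ Finset.range (n + m + 1),
        ((n + m).choose i) • (h (a ^ (n + m - i)) * h' (a ^ i))
        = ((n + m).choose m) • (h (a ^ n) * h' (a ^ m)) := by
      rw [Finset.sum_eq_single_of_mem m (Finset.mem_range.mpr (by omega))]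
      · rw [Nat.add_sub_cancel]
      · intro i hmem hi
        have hile := Finset.mem_range.1 hmem
        have hamem : ∀ j : ℕ, a ^ j ∈ StmtZeroAux.genW F g ^ j :=
          fun j => Submodule.pow_mem_pow _
            (StmtZeroAux.genV_le_genW F g (StmtZeroAux.ι_mem_genV F g z)) j
        rcases Nat.lt_or_ge i m with hlt | hge
        · rw [hlow' i hlt _ (hamem i), mul_zero, smul_zero]
        · have : n + m - i < n := by omega
          rw [hlow (n + m - i) this _ (hamem _), zero_mul, smul_zero]
    rw [hsingle, nsmul_eq_mul] at hsum0
    rcases mul_eq_zero.mp hsum0.symm with hzero2 | hval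
    · exact absurd (Nat.cast_eq_zero.mp hzero2)
        (Nat.choose_pos (by omega : m ≤ n + m)).ne'
    · exact hval
  -- polynomial argument
  obtain ⟨c, hc0, hcn, hcs⟩ := StmtZeroAux.pow_add_smul_coeffs (F := F)
    (UniversalEnvelopingAlgebra.ι F u : 𝒰) (UniversalEnvelopingAlgebra.ι F v : 𝒰) n
  obtain ⟨d, hd0, hdm, hds⟩ := StmtZeroAux.pow_add_smul_coeffs (F := F)
    (UniversalEnvelopingAlgebra.ι F u : 𝒰) (UniversalEnvelopingAlgebra.ι F v : 𝒰) m
  set P : Polynomial F := ∑ i ∈ Finset.range (n + 1),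
    Polynomial.C (h (c i)) * Polynomial.X ^ i with hP
  set Q : Polynomial F := ∑ i ∈ Finset.range (m + 1),
    Polynomial.C (h' (d i)) * Polynomial.X ^ i with hQ
  have hιlin : ∀ s : F, (UniversalEnvelopingAlgebra.ι F (u + s • v) : 𝒰)
      = UniversalEnvelopingAlgebra.ι F u + s • UniversalEnvelopingAlgebra.ι F v := by
    intro s
    letI : LieRing 𝒰 := LieRing.ofAssociativeRing
    rw [← LieHom.coe_toLinearMap, map_add, map_smul]
  have hPeval : ∀ s : F, P.eval s = h ((UniversalEnvelopingAlgebra.ι F (u + s • v) : 𝒰) ^ n) := by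
    intro s
    rw [hιlin s, hcs s, map_sum, hP, Polynomial.eval_finset_sum]
    refine Finset.sum_congr rfl fun i _ => ?_
    rw [Polynomial.eval_mul, Polynomial.eval_C, Polynomial.eval_pow, Polynomial.eval_X,
      map_smul, smul_eq_mul, mul_comm]
  have hQeval : ∀ s : F, Q.eval s = h' ((UniversalEnvelopingAlgebra.ι F (u + s • v) : 𝒰) ^ m) := by
    intro s
    rw [hιlin s, hds s, map_sum, hQ, Polynomial.eval_finset_sum]
    refine Finset.sum_congr rfl fun i _ => ?_
    rw [Polynomial.eval_mul, Polynomial.eval_C, Polynomial.eval_pow, Polynomial.eval_X,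
      map_smul, smul_eq_mul, mul_comm]
  have hPQ : P * Q = 0 := by
    apply Polynomial.funext
    intro s
    rw [Polynomial.eval_mul, Polynomial.eval_zero, hPeval s, hQeval s]
    exact hprod (u + s • v)
  have hcoeffP : P.coeff 0 = h (c 0) := by
    rw [hP, Polynomial.finset_sum_coeff]
    simp only [Polynomial.coeff_C_mul, Polynomial.coeff_X_pow]
    rw [Finset.sum_eq_single_of_mem 0 (Finset.mem_range.mpr (by omega))]
    · simp
    · intro i _ hi
      simp [Ne.symm hi]
  have hcoeffQ : Q.coeff m = h' (d m) := by
    rw [hQ, Polynomial.finset_sum_coeff]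
    simp only [Polynomial.coeff_C_mul, Polynomial.coeff_X_pow]
    rw [Finset.sum_eq_single_of_mem m (Finset.mem_range.mpr (by omega))]
    · simp
    · intro i _ hi
      simp [Ne.symm hi]
  rcases mul_eq_zero.mp hPQ with h0 | h0
  · rw [h0] at hcoeffP
    rw [hc0] at hcoeffP
    exact hu (by rw [← hcoeffP, Polynomial.coeff_zero])
  · rw [h0] at hcoeffQ
    rw [hdm] at hcoeffQ
    exact hv (by rw [← hcoeffQ, Polynomial.coeff_zero])
end

section
/- M is a submonoid of the multiplicative monoid of the algebra Nat; the set F[M] of all matrix coefficients is a point-separating algebra of F-valued functions on M; and for every m ∈ M the left and right multiplication maps l_m, r_m: M → M admit comorphisms of F[M] (i.e. f ∘ l_m ∈ F[M] and f ∘ r_m ∈ F[M] for every f ∈ F[M]), so that (π(m_1,m_2)f)(m) := f(m_1 m m_2) defines an action of the monoid M^op × M on the algebra F[M] by algebra endomorphisms. -/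
open TensorProduct

attribute [local instance 100] LieRing.ofAssociativeRing LieAlgebra.ofAssociativeAlgebra

universe u v w

/-- The data of a (full sub)category `C` of `g`-modules together with a category of duals:
an index type `ι`, for each index a `g`-module `V i`, and a chosen point-separating
subspace `du i` of the full linear dual of `V i`. -/
structure TannakaSetting (F : Type u) [Field F] (g : Type v) [LieRing g] [LieAlgebra F g] where
  ι : Type w
  V : ι → Type w
  [iAdd : ∀ i, AddCommGroup (V i)]
  [iMod : ∀ i, Module F (V i)]
  ρ : ∀ i, g →ₗ⁅F⁆ Module.End F (V i)
  du : ∀ i, Submodule F (Module.Dual F (V i))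

attribute [instance] TannakaSetting.iAdd TannakaSetting.iMod

namespace TannakaSetting

variable {F : Type u} [Field F] {g : Type v} [LieRing g] [LieAlgebra F g]
variable (D : TannakaSetting F g)

/-- `g`-equivariant linear maps between objects of the category. -/
def IsHom {i j : D.ι} (f : D.V i →ₗ[F] D.V j) : Prop :=
  ∀ x : g, f ∘ₗ (D.ρ i x : Module.End F (D.V i)) = (D.ρ j x : Module.End F (D.V j)) ∘ₗ f

/-- An endomorphism of `V i` lies in `End_{V^du}(V)`, i.e. its transpose preserves
the chosen dual subspace. -/
def PreservesDu (i : D.ι) (f : Module.End F (D.V i)) : Prop :=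
  ∀ φ ∈ D.du i, f.dualMap φ ∈ D.du i

/-- The action of `x ∈ g` on a tensor product of two objects. -/
noncomputable def tensorρ (i j : D.ι) (x : g) : Module.End F (D.V i ⊗[F] D.V j) :=
  TensorProduct.map (D.ρ i x) LinearMap.id + TensorProduct.map LinearMap.id (D.ρ j x)

/-- `e` realizes `V k` as a tensor product of the `g`-modules `V i` and `V j`. -/
def IsTensorProd (i j k : D.ι) (e : D.V k ≃ₗ[F] (D.V i ⊗[F] D.V j)) : Prop :=
  ∀ x : g, e.toLinearMap ∘ₗ (D.ρ k x : Module.End F (D.V k)) = D.tensorρ i j x ∘ₗ e.toLinearMap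

/-- `e` realizes `V k` as a direct sum of the `g`-modules `V i` and `V j`. -/
def IsSumProd (i j k : D.ι) (e : D.V k ≃ₗ[F] (D.V i × D.V j)) : Prop :=
  ∀ x : g, e.toLinearMap ∘ₗ (D.ρ k x : Module.End F (D.V k)) =
    ((D.ρ i x : Module.End F (D.V i)).prodMap (D.ρ j x : Module.End F (D.V j))) ∘ₗ e.toLinearMap

/-- `V i` is a one-dimensional trivial `g`-module. -/
def IsTrivOneDim (i : D.ι) : Prop :=
  Module.finrank F (D.V i) = 1 ∧ ∀ x : g, (D.ρ i x : Module.End F (D.V i)) = 0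

/-- The functional `φ ⊗ ψ` on a tensor product. -/
noncomputable def tensorDual {i j : D.ι} (φ : Module.Dual F (D.V i))
    (ψ : Module.Dual F (D.V j)) : Module.Dual F (D.V i ⊗[F] D.V j) :=
  TensorProduct.dualDistrib F (D.V i) (D.V j) (φ ⊗ₜ[F] ψ)

/-- The axioms on the pair of categories `C`, `C^du`:
`C` is closed under isomorphism, (binary) direct sums, tensor products, submodules,
contains a one-dimensional trivial module, `g` acts faithfully, and the duals separate points,
are stable under the transposed `g`-action and under transposes of morphisms, and are compatible
with direct sums and tensor products. -/
structure IsGoodSetting : Prop where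
  separating : ∀ (i : D.ι) (v : D.V i), v ≠ 0 → ∃ φ ∈ D.du i, φ v ≠ 0
  du_g : ∀ (i : D.ι) (x : g), D.PreservesDu i (D.ρ i x)
  du_hom : ∀ (i j : D.ι) (f : D.V i →ₗ[F] D.V j), D.IsHom f →
    ∀ ψ ∈ D.du j, f.dualMap ψ ∈ D.du i
  faithful : ∀ x : g, (∀ i, (D.ρ i x : Module.End F (D.V i)) = 0) → x = 0
  exists_triv : ∃ i, D.IsTrivOneDim i
  exists_sum : ∀ i j : D.ι, ∃ (k : D.ι) (e : D.V k ≃ₗ[F] (D.V i × D.V j)), D.IsSumProd i j k e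
  exists_tensor : ∀ i j : D.ι,
    ∃ (k : D.ι) (e : D.V k ≃ₗ[F] (D.V i ⊗[F] D.V j)), D.IsTensorProd i j k e
  du_tensor : ∀ (i j k : D.ι) (e : D.V k ≃ₗ[F] (D.V i ⊗[F] D.V j)), D.IsTensorProd i j k e →
    ∀ φ ∈ D.du i, ∀ ψ ∈ D.du j, e.toLinearMap.dualMap (D.tensorDual φ ψ) ∈ D.du k
  du_sum : ∀ (i j k : D.ι) (e : D.V k ≃ₗ[F] (D.V i × D.V j)), D.IsSumProd i j k e →
    ∀ ξ : Module.Dual F (D.V k), ξ ∈ D.du k ↔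
      ∃ φ ∈ D.du i, ∃ ψ ∈ D.du j,
        ξ = e.toLinearMap.dualMap
          ((LinearMap.fst F (D.V i) (D.V j)).dualMap φ +
            (LinearMap.snd F (D.V i) (D.V j)).dualMap ψ)
  submod_closed : ∀ (i : D.ι) (U : Submodule F (D.V i)), (∀ x : g, ∀ u ∈ U, D.ρ i x u ∈ U) →
    ∃ (k : D.ι) (e : D.V k ≃ₗ[F] ↥U), ∀ (x : g) (v : D.V k),
      (↑(e ((D.ρ k x) v)) : D.V i) = D.ρ i x ↑(e v)
  isoClosed : ∀ (W : Type w) [AddCommGroup W] [Module F W] (ρW : g →ₗ⁅F⁆ Module.End F W)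
    (i : D.ι) (e : D.V i ≃ₗ[F] W), (∀ (x : g) (v : D.V i), e (D.ρ i x v) = ρW x (e v)) →
    ∃ (k : D.ι) (e' : D.V k ≃ₗ[F] W), ∀ (x : g) (v : D.V k), e' (D.ρ k x v) = ρW x (e' v)

/-- The algebra `Nat` of natural transformations: families of endomorphisms
`m i ∈ End_{V^du}(V i)` commuting with all `g`-equivariant maps between objects. -/
def NatAlg : Set (∀ i, Module.End F (D.V i)) :=
  { m | (∀ i, D.PreservesDu i (m i)) ∧
        ∀ (i j : D.ι) (f : D.V i →ₗ[F] D.V j), D.IsHom f → f ∘ₗ m i = m j ∘ₗ f }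

/-- The Tannaka monoid `M`: natural transformations compatible with tensor products and
acting as the identity on trivial one-dimensional modules. -/
def M : Set (∀ i, Module.End F (D.V i)) :=
  { m | m ∈ D.NatAlg ∧
        (∀ (i j k : D.ι) (e : D.V k ≃ₗ[F] (D.V i ⊗[F] D.V j)), D.IsTensorProd i j k e →
          e.toLinearMap ∘ₗ m k = TensorProduct.map (m i) (m j) ∘ₗ e.toLinearMap) ∧
        (∀ i, D.IsTrivOneDim i → m i = 1) }

/-- The matrix coefficient `f_{φ v}` as a function on the Tannaka monoid `M`. -/
def matCoef (i : D.ι) (φ : Module.Dual F (D.V i)) (v : D.V i) : ↥D.M → F :=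
  fun m => φ (m.1 i v)

/-- The coordinate ring `F[M]` of matrix coefficients (a set of functions on `M`). -/
def coordRing : Set (↥D.M → F) :=
  { f | ∃ (i : D.ι) (φ : Module.Dual F (D.V i)) (v : D.V i), φ ∈ D.du i ∧ f = D.matCoef i φ v }

/-- The Lie algebra `Lie(M)` of the Tannaka monoid. -/
def LieM : Set (∀ i, Module.End F (D.V i)) :=
  { x | x ∈ D.NatAlg ∧
        (∀ (i j k : D.ι) (e : D.V k ≃ₗ[F] (D.V i ⊗[F] D.V j)), D.IsTensorProd i j k e →
          e.toLinearMap ∘ₗ x k =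
            (TensorProduct.map (x i) LinearMap.id +
              TensorProduct.map LinearMap.id (x j)) ∘ₗ e.toLinearMap) ∧
        (∀ i, D.IsTrivOneDim i → x i = 0) ∧
        (∃ δ : (↥D.M → F) → F, ∀ (i : D.ι) (φ : Module.Dual F (D.V i)) (v : D.V i),
          φ ∈ D.du i → δ (D.matCoef i φ v) = φ (x i v)) }

/-- The Lie algebra `Lie(N)` of a submonoid `N ⊆ M`: those `x ∈ Lie(M)` whose derivation
`δ_x` annihilates the vanishing ideal `I(N) ⊆ F[M]`. -/
def LieOf (N : Set (↥D.M)) : Set (∀ i, Module.End F (D.V i)) :=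
  { x | x ∈ D.LieM ∧ ∀ (i : D.ι) (φ : Module.Dual F (D.V i)) (v : D.V i), φ ∈ D.du i →
      (∀ n ∈ N, D.matCoef i φ v n = 0) → φ (x i v) = 0 }

/-- The unit group `M^×` of the Tannaka monoid, as a subset of `M`. -/
def unitsSet : Set (↥D.M) :=
  { m | ∃ n : ↥D.M, m.1 * n.1 = 1 ∧ n.1 * m.1 = 1 }

/-- The pair `C`, `C^du` is good for integrating `g`: `g ⊆ Lie(M)`. -/
def Good : Prop := ∀ x : g, (fun i => (D.ρ i x : Module.End F (D.V i))) ∈ D.LieM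

/-- The pair `C`, `C^du` is very good for integrating `g`: `g ⊆ Lie(M^×)`. -/
def VeryGood : Prop :=
  ∀ x : g, (fun i => (D.ρ i x : Module.End F (D.V i))) ∈ D.LieOf D.unitsSet

/-- A subset `S ⊆ M` is Zariski dense in `M`. -/
def DenseIn (S : Set (↥D.M)) : Prop :=
  ∀ f ∈ D.coordRing, (∀ m ∈ S, f m = 0) → ∀ m, f m = 0

theorem one_mem_M : (1 : ∀ i, Module.End F (D.V i)) ∈ D.M := by
  refine ⟨⟨?_, ?_⟩, ?_, ?_⟩
  · intro i φ hφ
    exact hφ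
  · intro i j f _
    ext v
    simp
  · intro i j k e _
    ext v
    simp [TensorProduct.map_one]
  · intro i _
    rfl

/-- The unit of the Tannaka monoid as an element of the subtype `↥M`. -/
def oneM : ↥D.M := ⟨1, D.one_mem_M⟩

end TannakaSetting

open TensorProduct

variable {F : Type u} [Field F] [CharZero F] {g : Type v} [LieRing g] [LieAlgebra F g]

/-- **The Tannaka monoid and its coordinate ring of matrix coefficients.**
`M` is a submonoid of the multiplicative monoid of the algebra `Nat`; the set `F[M]` of all
matrix coefficients is a point-separating algebra of `F`-valued functions on `M`; and for every
`m ∈ M` the left and right multiplication maps admit comorphisms of `F[M]`, so that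
`(π(m₁, m₂) f)(m) := f (m₁ m m₂)` defines an action of `Mᵒᵖ × M` on `F[M]` by algebra
endomorphisms. -/
theorem stmt_1 (D : TannakaSetting F g) (HG : D.IsGoodSetting) :
    -- `Nat` is a monoid and `M` is a submonoid of `Nat`:
    ((1 : ∀ i, Module.End F (D.V i)) ∈ D.NatAlg ∧
      (∀ m ∈ D.NatAlg, ∀ n ∈ D.NatAlg, m * n ∈ D.NatAlg) ∧
      D.M ⊆ D.NatAlg ∧
      (1 : ∀ i, Module.End F (D.V i)) ∈ D.M ∧
      (∀ m ∈ D.M, ∀ n ∈ D.M, m * n ∈ D.M)) ∧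
    -- `F[M]` is an algebra of functions on `M`:
    ((1 : ↥D.M → F) ∈ D.coordRing ∧
      (∀ f ∈ D.coordRing, ∀ h ∈ D.coordRing, f + h ∈ D.coordRing) ∧
      (∀ f ∈ D.coordRing, ∀ c : F, c • f ∈ D.coordRing) ∧
      (∀ f ∈ D.coordRing, ∀ h ∈ D.coordRing, f * h ∈ D.coordRing)) ∧
    -- `F[M]` separates the points of `M`:
    (∀ m n : ↥D.M, (∀ f ∈ D.coordRing, f m = f n) → m = n) ∧
    -- the left and right multiplications by elements of `M` admit comorphisms of `F[M]`:
    (∀ m₀ : ↥D.M, ∀ f ∈ D.coordRing,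
      (∃ h ∈ D.coordRing, ∀ (m : ↥D.M) (hmem : m₀.1 * m.1 ∈ D.M),
        h m = f ⟨m₀.1 * m.1, hmem⟩) ∧
      (∃ h ∈ D.coordRing, ∀ (m : ↥D.M) (hmem : m.1 * m₀.1 ∈ D.M),
        h m = f ⟨m.1 * m₀.1, hmem⟩)) := by

  classical
  -- naturality helper
  have natur : ∀ (m : ∀ i, Module.End F (D.V i)), m ∈ D.NatAlg →
      ∀ (i j : D.ι) (f : D.V i →ₗ[F] D.V j), D.IsHom f →
      ∀ v : D.V i, f (m i v) = m j (f v) := by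
    intro m hm i j f hf v
    exact LinearMap.congr_fun (hm.2 i j f hf) v
  have natMul : ∀ m ∈ D.NatAlg, ∀ n ∈ D.NatAlg, m * n ∈ D.NatAlg := by
    intro m hm n hn
    refine ⟨fun i φ hφ => ?_, fun i j f hf => ?_⟩
    · have : ((m * n) i).dualMap φ = (n i).dualMap ((m i).dualMap φ) := by
        ext v
        simp [LinearMap.dualMap_apply, Pi.mul_apply, Module.End.mul_apply]
      rw [this]
      exact hn.1 i _ (hm.1 i φ hφ)
    · ext v
      simp only [LinearMap.comp_apply, Pi.mul_apply, Module.End.mul_apply]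
      rw [natur m hm i j f hf, natur n hn i j f hf]
  have MsubNat : D.M ⊆ D.NatAlg := fun m hm => hm.1
  have Mmul : ∀ m ∈ D.M, ∀ n ∈ D.M, m * n ∈ D.M := by
    intro m hm n hn
    refine ⟨natMul m hm.1 n hn.1, ?_, ?_⟩
    · intro i j k e he
      have h1 := hm.2.1 i j k e he
      have h2 := hn.2.1 i j k e he
      have : (m * n) k = m k ∘ₗ n k := rfl
      rw [this, ← LinearMap.comp_assoc, h1, LinearMap.comp_assoc, h2,
        ← LinearMap.comp_assoc, ← TensorProduct.map_comp]
      rfl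
    · intro i hi
      have h1 := hm.2.2 i hi
      have h2 := hn.2.2 i hi
      have : (m * n) i = m i * n i := rfl
      rw [this, h1, h2, one_mul]
  -- F[M] contains 1
  have coordOne : (1 : ↥D.M → F) ∈ D.coordRing := by
    obtain ⟨i, hdim, htriv⟩ := HG.exists_triv
    have : Nontrivial (D.V i) := by
      have : 0 < Module.finrank F (D.V i) := by omega
      exact Module.nontrivial_of_finrank_pos this
    obtain ⟨v, hv⟩ := exists_ne (0 : D.V i)
    obtain ⟨φ, hφ, hφv⟩ := HG.separating i v hv
    refine ⟨i, (φ v)⁻¹ • φ, v, Submodule.smul_mem _ _ hφ, ?_⟩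
    funext m
    have hmi : m.1 i = 1 := m.2.2.2 i ⟨hdim, htriv⟩
    simp [TannakaSetting.matCoef, hmi, inv_mul_cancel₀ hφv]
  -- F[M] closed under addition
  have coordAdd : ∀ f ∈ D.coordRing, ∀ h ∈ D.coordRing, f + h ∈ D.coordRing := by
    rintro f ⟨i, φ, v, hφ, rfl⟩ h ⟨j, ψ, w, hψ, rfl⟩
    obtain ⟨k, e, he⟩ := HG.exists_sum i j
    set ξ := e.toLinearMap.dualMap
      ((LinearMap.fst F (D.V i) (D.V j)).dualMap φ +
        (LinearMap.snd F (D.V i) (D.V j)).dualMap ψ) with hξdef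
    have hξ : ξ ∈ D.du k := (HG.du_sum i j k e he ξ).2 ⟨φ, hφ, ψ, hψ, rfl⟩
    refine ⟨k, ξ, e.symm (v, w), hξ, ?_⟩
    funext m
    have hfst : D.IsHom ((LinearMap.fst F (D.V i) (D.V j)) ∘ₗ e.toLinearMap) := by
      intro x
      apply LinearMap.ext
      intro u
      have hx := LinearMap.congr_fun (he x) u
      simp only [LinearMap.comp_apply, LinearEquiv.coe_coe] at hx ⊢
      rw [hx]
      simp [TannakaSetting.IsSumProd] at *
    have hsnd : D.IsHom ((LinearMap.snd F (D.V i) (D.V j)) ∘ₗ e.toLinearMap) := by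
      intro x
      apply LinearMap.ext
      intro u
      have hx := LinearMap.congr_fun (he x) u
      simp only [LinearMap.comp_apply, LinearEquiv.coe_coe] at hx ⊢
      rw [hx]
      simp
    have h1 := natur m.1 m.2.1 k i _ hfst (e.symm (v, w))
    have h2 := natur m.1 m.2.1 k j _ hsnd (e.symm (v, w))
    simp only [LinearMap.comp_apply, LinearEquiv.coe_coe, LinearEquiv.apply_symm_apply,
      LinearMap.fst_apply, LinearMap.snd_apply] at h1 h2
    simp [TannakaSetting.matCoef, hξdef, LinearMap.dualMap_apply, h1, h2]
  -- F[M] closed under scalar multiplication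
  have coordSmul : ∀ f ∈ D.coordRing, ∀ c : F, c • f ∈ D.coordRing := by
    rintro f ⟨i, φ, v, hφ, rfl⟩ c
    refine ⟨i, c • φ, v, Submodule.smul_mem _ _ hφ, ?_⟩
    funext m
    simp [TannakaSetting.matCoef]
  -- F[M] closed under multiplication
  have coordMul : ∀ f ∈ D.coordRing, ∀ h ∈ D.coordRing, f * h ∈ D.coordRing := by
    rintro f ⟨i, φ, v, hφ, rfl⟩ h ⟨j, ψ, w, hψ, rfl⟩
    obtain ⟨k, e, he⟩ := HG.exists_tensor i j
    have hξ := HG.du_tensor i j k e he φ hφ ψ hψ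
    refine ⟨k, _, e.symm (v ⊗ₜ w), hξ, ?_⟩
    funext m
    have h1 : e (m.1 k (e.symm (v ⊗ₜ w))) = (m.1 i v) ⊗ₜ[F] (m.1 j w) := by
      have := LinearMap.congr_fun (m.2.2.1 i j k e he) (e.symm (v ⊗ₜ w))
      simpa using this
    simp [TannakaSetting.matCoef, TannakaSetting.tensorDual, LinearMap.dualMap_apply, h1]
  refine ⟨⟨⟨fun i φ hφ => by exact hφ, fun i j f _ => by ext v; simp⟩,
    natMul, MsubNat, D.one_mem_M, Mmul⟩,
    ⟨coordOne, coordAdd, coordSmul, coordMul⟩, ?_, ?_⟩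
  · -- separation
    intro m n hfm
    apply Subtype.ext
    funext i
    apply LinearMap.ext
    intro v
    by_contra hne
    have hd : m.1 i v - n.1 i v ≠ 0 := sub_ne_zero.mpr hne
    obtain ⟨φ, hφ, hφd⟩ := HG.separating i _ hd
    have := hfm (D.matCoef i φ v) ⟨i, φ, v, hφ, rfl⟩
    simp only [TannakaSetting.matCoef] at this
    apply hφd
    rw [map_sub, this, sub_self]
  · -- comorphisms
    rintro m₀ f ⟨i, φ, v, hφ, rfl⟩
    constructor
    · refine ⟨D.matCoef i ((m₀.1 i).dualMap φ) v,
        ⟨i, _, v, m₀.2.1.1 i φ hφ, rfl⟩, ?_⟩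
      intro m hmem
      simp [TannakaSetting.matCoef, LinearMap.dualMap_apply, Pi.mul_apply,
        Module.End.mul_apply]
    · refine ⟨D.matCoef i φ (m₀.1 i v), ⟨i, φ, _, hφ, rfl⟩, ?_⟩
      intro m hmem
      simp [TannakaSetting.matCoef, Pi.mul_apply, Module.End.mul_apply]
end

section
/- Assume the pair C, C^du is good for integrating g. Then C(M) ∩ M^× = {m ∈ M^× : m x m^{-1} = x for all x ∈ Lie(M)}, i.e. C(M) ∩ M^× is exactly the kernel of the adjoint (conjugation) action of the unit group M^× on Lie(M). If moreover the pair C, C^du is very good for integrating g, then this kernel coincides with C(M^×). -/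
open TensorProduct

universe u v w

attribute [local instance] LieRing.ofAssociativeRing

open TensorProduct

variable {F : Type u} [Field F] [CharZero F] {g : Type v} [LieRing g] [LieAlgebra F g]


namespace TannakaSetting

variable {F : Type u} [Field F] {g : Type v} [LieRing g] [LieAlgebra F g]
variable (D : TannakaSetting F g)

lemma sep_eq (HG : D.IsGoodSetting) {i : D.ι} {w1 w2 : D.V i}
    (h : ∀ φ ∈ D.du i, φ w1 = φ w2) : w1 = w2 := by
  by_contra hne
  obtain ⟨φ, hφ, hφne⟩ := HG.separating i (w1 - w2) (sub_ne_zero.mpr hne)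
  exact hφne (by simp [h φ hφ])

lemma comm_of_equivariant {m : ∀ i, Module.End F (D.V i)}
    (hm : ∀ (x : g) (i : D.ι),
      (m i) ∘ₗ (D.ρ i x : Module.End F (D.V i)) = (D.ρ i x : Module.End F (D.V i)) ∘ₗ m i)
    {p : ∀ i, Module.End F (D.V i)} (hp : p ∈ D.NatAlg) : m * p = p * m := by
  funext i
  have h := hp.2 i i (m i) (fun x => hm x i)
  exact LinearMap.ext fun v => LinearMap.congr_fun h v

lemma key {i k : D.ι} (e : D.V k ≃ₗ[F] (D.V i × D.V i)) (he : D.IsSumProd i i k e)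
    (φ' ψ : Module.Dual F (D.V i)) (v w : D.V i)
    (u : ∀ j, Module.End F (D.V j))
    (hu : ∀ (a b : D.ι) (f : D.V a →ₗ[F] D.V b), D.IsHom f → f ∘ₗ u a = u b ∘ₗ f) :
    (e.toLinearMap.dualMap
      ((LinearMap.fst F (D.V i) (D.V i)).dualMap φ' +
        (LinearMap.snd F (D.V i) (D.V i)).dualMap ψ)) (u k (e.symm (v, w)))
      = φ' (u i v) + ψ (u i w) := by
  have hfst : D.IsHom ((LinearMap.fst F (D.V i) (D.V i)) ∘ₗ e.toLinearMap) := by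
    intro x
    rw [LinearMap.comp_assoc, he x]
    ext z
    simp
  have hsnd : D.IsHom ((LinearMap.snd F (D.V i) (D.V i)) ∘ₗ e.toLinearMap) := by
    intro x
    rw [LinearMap.comp_assoc, he x]
    ext z
    simp
  have h1 := LinearMap.congr_fun (hu k i _ hfst) (e.symm (v, w))
  have h2 := LinearMap.congr_fun (hu k i _ hsnd) (e.symm (v, w))
  simp only [LinearMap.coe_comp, Function.comp_apply, LinearEquiv.coe_coe,
    LinearEquiv.apply_symm_apply, LinearMap.fst_apply, LinearMap.snd_apply] at h1 h2
  simp [LinearMap.dualMap_apply, h1, h2]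

end TannakaSetting

/-- **The kernel of the adjoint action of `M^×` on `Lie(M)`.**
Assume the pair `C`, `C^du` is good for integrating `g`.  Then for every unit `m ∈ M^×`,
`m` lies in the center `C(M)` of `M` if and only if `m x m⁻¹ = x` for all `x ∈ Lie(M)`;
i.e. `C(M) ∩ M^×` is the kernel of the adjoint action of `M^×` on `Lie(M)`.
If moreover the pair is very good for integrating `g`, then for every unit `m ∈ M^×`,
`m` is central in `M` if and only if `m` is central in `M^×`; i.e. the kernel coincides
with `C(M^×)`. -/
theorem stmt_5 (D : TannakaSetting F g) (HG : D.IsGoodSetting) (hGood : D.Good) :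
    (∀ m ∈ D.M, (∃ n ∈ D.M, m * n = 1 ∧ n * m = 1) →
      ((∀ p ∈ D.M, m * p = p * m) ↔
        (∀ n ∈ D.M, m * n = 1 → n * m = 1 → ∀ x ∈ D.LieM, m * x * n = x))) ∧
    (D.VeryGood →
      ∀ m ∈ D.M, (∃ n ∈ D.M, m * n = 1 ∧ n * m = 1) →
        ((∀ p ∈ D.M, m * p = p * m) ↔
          (∀ p ∈ D.M, (∃ q ∈ D.M, p * q = 1 ∧ q * p = 1) → m * p = p * m))) := by
  constructor
  · intro m hm hinv
    constructor
    · intro hc n' hn' hmn' hn'm x hx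
      have hmx : m * x = x * m := by
        funext i
        apply LinearMap.ext
        intro v
        apply D.sep_eq HG
        intro φ hφ
        obtain ⟨δ, hδ⟩ := hx.2.2.2
        have hφ' : (m i).dualMap φ ∈ D.du i := hm.1.1 i φ hφ
        have hmc : D.matCoef i ((m i).dualMap φ) v = D.matCoef i φ (m i v) := by
          funext u
          have hcm : m * u.1 = u.1 * m := hc u.1 u.2
          have := LinearMap.congr_fun (congrFun hcm i) v
          simp only [TannakaSetting.matCoef, LinearMap.dualMap_apply]
          simp only [Pi.mul_apply, Module.End.mul_apply] at this
          rw [this]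
        have h1 := hδ i ((m i).dualMap φ) v hφ'
        have h2 := hδ i φ (m i v) hφ
        rw [hmc, h2] at h1
        simpa [LinearMap.dualMap_apply] using h1.symm
      calc m * x * n' = x * m * n' := by rw [hmx]
        _ = x * (m * n') := by rw [mul_assoc]
        _ = x := by rw [hmn', mul_one]
    · intro h p hp
      obtain ⟨n, hn, hmn, hnm⟩ := hinv
      refine D.comm_of_equivariant (fun x i => ?_) hp.1
      have hmx := h n hn hmn hnm _ (hGood x)
      have : m * (fun j => (D.ρ j x : Module.End F (D.V j))) =
          (fun j => (D.ρ j x : Module.End F (D.V j))) * m := by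
        calc m * (fun j => (D.ρ j x : Module.End F (D.V j)))
            = m * (fun j => (D.ρ j x : Module.End F (D.V j))) * (n * m) := by
              rw [hnm, mul_one]
          _ = (m * (fun j => (D.ρ j x : Module.End F (D.V j))) * n) * m := by
              simp only [mul_assoc]
          _ = (fun j => (D.ρ j x : Module.End F (D.V j))) * m := by rw [hmx]
      have := congrFun this i
      exact LinearMap.ext fun v => LinearMap.congr_fun this v
  · intro hVG m hm _
    constructor
    · intro hc p hp _
      exact hc p hp
    · intro h p hp
      refine D.comm_of_equivariant (fun x i => ?_) hp.1
      · apply LinearMap.ext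
        intro v
        apply D.sep_eq HG
        intro φ hφ
        obtain ⟨k, e, he⟩ := HG.exists_sum i i
        have hφ' : (m i).dualMap φ ∈ D.du i := hm.1.1 i φ hφ
        have hψ : -φ ∈ D.du i := neg_mem hφ
        set ξ := e.toLinearMap.dualMap
          ((LinearMap.fst F (D.V i) (D.V i)).dualMap ((m i).dualMap φ) +
            (LinearMap.snd F (D.V i) (D.V i)).dualMap (-φ)) with hξdef
        have hξ : ξ ∈ D.du k := (HG.du_sum i i k e he ξ).mpr
          ⟨(m i).dualMap φ, hφ', -φ, hψ, rfl⟩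
        have hx := hVG x
        have hvanish : ∀ u ∈ D.unitsSet, D.matCoef k ξ (e.symm (v, m i v)) u = 0 := by
          intro u hu
          obtain ⟨q, hq1, hq2⟩ := hu
          have hcm : m * u.1 = u.1 * m := h u.1 u.2 ⟨q.1, q.2, hq1, hq2⟩
          have hcmv := LinearMap.congr_fun (congrFun hcm i) v
          simp only [Pi.mul_apply, Module.End.mul_apply] at hcmv
          have hA := D.key e he ((m i).dualMap φ) (-φ) v (m i v) u.1 u.2.1.2
          simp only [TannakaSetting.matCoef, hξdef]
          rw [hA]
          simp [LinearMap.dualMap_apply, hcmv]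
        have h0 := hx.2 k ξ (e.symm (v, m i v)) hξ hvanish
        have hA := D.key e he ((m i).dualMap φ) (-φ) v (m i v)
          (fun j => (D.ρ j x : Module.End F (D.V j))) hx.1.1.2
        rw [hξdef] at h0
        rw [hA] at h0
        simp only [LinearMap.dualMap_apply, LinearMap.neg_apply] at h0
        simpa [LinearMap.comp_apply] using sub_eq_zero.mp (by linear_combination h0)
end

section
/- Assume the pair C, C^du is good for integrating g. Let V be a g-module contained in C, equipped with the Zariski topology determined by the coordinate ring F[V] generated by the linear functions in V^du. Then every M-invariant linear subspace U of V which is closed in this Zariski topology is also g-invariant, i.e. x_V(U) ⊆ U for every x ∈ g. -/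
open TensorProduct

attribute [local instance 100] LieRing.ofAssociativeRing

universe u v w

open TensorProduct

variable {F : Type u} [Field F] [CharZero F] {g : Type v} [LieRing g] [LieAlgebra F g]

/-- If a point `v` is killed by every functional in `du` vanishing on `U`, then every
polynomial function in the algebra generated by `du` which vanishes on `U` vanishes at `v`. -/
lemma aux_closed_poly {F : Type*} [Field F] {V : Type*} [AddCommGroup V] [Module F V]
    (du : Submodule F (Module.Dual F V)) (U : Submodule F V)
    (v : V) (hv : ∀ φ ∈ du, (∀ u ∈ U, φ u = 0) → φ v = 0)
    (p : V → F)
    (hp : p ∈ Algebra.adjoin F {q : V → F | ∃ φ ∈ du, q = fun w => φ w})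
    (hpU : ∀ u ∈ U, p u = 0) : p v = 0 := by
  rw [Algebra.adjoin_eq_range] at hp
  obtain ⟨q, rfl⟩ := hp
  obtain ⟨n, f, -, q', rfl⟩ := MvPolynomial.exists_fin_rename q
  have hch : ∀ j : Fin n, ∃ φ : Module.Dual F V, φ ∈ du ∧ (f j : V → F) = fun w => φ w :=
    fun j => (f j).2
  choose φ hφmem hφeq using hch
  set Φ : V →ₗ[F] (Fin n → F) := LinearMap.pi φ with hΦ
  -- evaluation of the polynomial at a point
  have hev : ∀ w : V,
      (MvPolynomial.aeval ((↑) : {q : V → F | ∃ φ ∈ du, q = fun w => φ w} → (V → F))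
        (MvPolynomial.rename f q')) w = MvPolynomial.aeval (fun j : Fin n => Φ w j) q' := by
    intro w
    rw [MvPolynomial.aeval_rename]
    have h := AlgHom.congr_fun
      (MvPolynomial.comp_aeval (f := ((↑) : {q : V → F | ∃ φ ∈ du, q = fun w => φ w} → (V → F)) ∘ f)
        (Pi.evalAlgHom F (fun _ : V => F) w)) q'
    simp only [AlgHom.comp_apply, Pi.evalAlgHom_apply] at h
    rw [h, show (fun i => (Subtype.val ∘ f) i w) = (fun j => Φ w j) from
      funext fun j => congrFun (hφeq j) w]
  -- Φ v lies in Φ(U)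
  have hmem : Φ v ∈ U.map Φ := by
    by_contra hne
    have h0 : ((U.map Φ).mkQ (Φ v)) ≠ 0 := by
      simpa [Submodule.mkQ_apply, Submodule.Quotient.mk_eq_zero] using hne
    obtain ⟨g, hg⟩ : ∃ g : Module.Dual F ((Fin n → F) ⧸ U.map Φ), g ((U.map Φ).mkQ (Φ v)) ≠ 0 := by
      by_contra h
      push_neg at h
      exact h0 ((Module.forall_dual_apply_eq_zero_iff F _).mp h)
    set ψ : Module.Dual F V := (g ∘ₗ (U.map Φ).mkQ) ∘ₗ Φ with hψ
    have hψmem : ψ ∈ du := by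
      have hrep : ψ = ∑ j : Fin n,
          (g ((U.map Φ).mkQ (fun k => if j = k then (1:F) else 0))) • φ j := by
        ext w
        have hw : Φ w = ∑ j : Fin n, (Φ w j) • fun k => if j = k then (1:F) else 0 :=
          pi_eq_sum_univ (Φ w)
        calc ψ w = g ((U.map Φ).mkQ (Φ w)) := rfl
          _ = ∑ j : Fin n, (Φ w j) * g ((U.map Φ).mkQ (fun k => if j = k then (1:F) else 0)) := by
              rw [hw]; simp [map_sum, map_smul, smul_eq_mul]
          _ = _ := by
              simp only [LinearMap.coe_sum, Finset.sum_apply, LinearMap.smul_apply,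
                smul_eq_mul]
              exact Finset.sum_congr rfl fun j _ => by
                rw [mul_comm]; rfl
      rw [hrep]
      exact Submodule.sum_mem _ fun j _ => Submodule.smul_mem _ _ (hφmem j)
    have hψU : ∀ u ∈ U, ψ u = 0 := by
      intro u hu
      have : (U.map Φ).mkQ (Φ u) = 0 := by
        simp only [Submodule.mkQ_apply, Submodule.Quotient.mk_eq_zero]
        exact Submodule.mem_map_of_mem hu
      show g ((U.map Φ).mkQ (Φ u)) = 0
      rw [this, map_zero]
    exact hg (hv ψ hψmem hψU)
  obtain ⟨u, hu, huv⟩ := hmem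
  show (MvPolynomial.aeval ((↑) : {q : V → F | ∃ φ ∈ du, q = fun w => φ w} → (V → F)))
    (MvPolynomial.rename f q') v = 0
  rw [hev v, ← huv, ← hev u]
  exact hpU u hu

/-- **Zariski closed `M`-invariant subspaces are `g`-invariant.**
Assume the pair `C`, `C^du` is good for integrating `g`.  Let `V` be a `g`-module contained in
`C`, equipped with the Zariski topology determined by the coordinate ring `F[V]` generated by
the linear functions in `V^du`.  Then every `M`-invariant linear subspace `U` of `V` which is
closed in this topology is also `g`-invariant. -/
theorem stmt_6 (D : TannakaSetting F g) (HG : D.IsGoodSetting) (hGood : D.Good)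
    (i : D.ι) (U : Submodule F (D.V i))
    (hInv : ∀ m ∈ D.M, ∀ u ∈ U, m i u ∈ U)
    (hClosed : ∀ v : D.V i,
      (∀ p : D.V i → F,
        p ∈ Algebra.adjoin F {q : D.V i → F | ∃ φ ∈ D.du i, q = fun w => φ w} →
        (∀ u ∈ U, p u = 0) → p v = 0) → v ∈ U) :
    ∀ x : g, ∀ u ∈ U, D.ρ i x u ∈ U := by
  intro x u hu
  apply hClosed
  intro p hp hpU
  refine aux_closed_poly (D.du i) U _ ?_ p hp hpU
  intro φ hφ hφU
  obtain ⟨-, -, -, δ, hδ⟩ := hGood x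
  have h1 : D.matCoef i φ u = D.matCoef i 0 u := by
    funext m
    simp [TannakaSetting.matCoef, hφU _ (hInv m.1 m.2 u hu)]
  have h2 := hδ i φ u hφ
  rw [h1, hδ i 0 u (Submodule.zero_mem _)] at h2
  simpa using h2.symm
end

section
/- Let x ∈ Lie(M) be locally finite. Suppose that for every object V of C the semisimple part s_V and the locally nilpotent part n_V of the additive Jordan–Chevalley decomposition of the locally finite endomorphism x_V already lie in End_{V^du}(V). Set s := (s_V)_{V an object of C} and n := (n_V)_{V an object of C}. Then s is a semisimple element of Lie(M), n is a locally nilpotent element of Lie(M), x = s + n and [s,n] = 0, and s and n are uniquely determined by these properties. -/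
open TensorProduct

universe u v w

attribute [local instance] LieRing.ofAssociativeRing

open TensorProduct

section LocallyFiniteEndomorphisms

variable (F : Type u) [Field F] {V : Type*} [AddCommGroup V] [Module F V]

/-- A locally finite endomorphism: every vector lies in a finite-dimensional
invariant subspace. -/
def IsLocallyFinite (f : Module.End F V) : Prop :=
  ∀ v : V, ∃ U : Submodule F V, v ∈ U ∧ FiniteDimensional F ↥U ∧ ∀ u ∈ U, f u ∈ U

/-- A locally nilpotent endomorphism: every vector is annihilated by some power. -/
def LocallyNilpotent (f : Module.End F V) : Prop :=
  ∀ v : V, ∃ n : ℕ, (f ^ n) v = 0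

/-- An endomorphism is (absolutely) semisimple if its extension to the scalar extension by
the algebraic closure of `F` is semisimple. -/
def IsAbsSemisimple (f : Module.End F V) : Prop :=
  Module.End.IsSemisimple (LinearMap.baseChange (AlgebraicClosure F) f)

/-- A locally weak unipotent endomorphism: `V = ker f ⊕ im f`, and the restriction of `f`
to its image is locally unipotent. -/
def LocallyWeakUnipotent (f : Module.End F V) : Prop :=
  IsCompl (LinearMap.ker f) (LinearMap.range f) ∧
  ∀ v ∈ LinearMap.range f, ∃ n : ℕ, ((f - 1) ^ n) v = 0

end LocallyFiniteEndomorphisms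

namespace JCAux

open Module Polynomial

section AnyField

variable {k : Type*} [Field k] {V : Type*} [AddCommGroup V] [Module k V]
  {W : Type*} [AddCommGroup W] [Module k W]

lemma pow_apply_eq_zero_of_le {f : Module.End k V} {a b : ℕ} (h : a ≤ b) {v : V}
    (hv : (f ^ a) v = 0) : (f ^ b) v = 0 := by
  rw [← Nat.sub_add_cancel h, pow_add, Module.End.mul_apply, hv, map_zero]

lemma forall_pow_eq_zero_of_span {n : Module.End k V} {S : Set V} (hS : S.Finite)
    (hn : ∀ v ∈ S, ∃ r : ℕ, (n ^ r) v = 0) :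
    ∃ R : ℕ, ∀ u ∈ Submodule.span k S, (n ^ R) u = 0 := by
  classical
  have hglob : ∀ v : V, ∃ r : ℕ, v ∈ S → (n ^ r) v = 0 := by
    intro v
    by_cases h : v ∈ S
    · obtain ⟨r, hr⟩ := hn v h; exact ⟨r, fun _ => hr⟩
    · exact ⟨0, fun h' => absurd h' h⟩
  choose r hr using hglob
  refine ⟨hS.toFinset.sup r, fun u hu => ?_⟩
  have : Submodule.span k S ≤ LinearMap.ker (n ^ hS.toFinset.sup r) := by
    rw [Submodule.span_le]
    intro v hv
    exact LinearMap.mem_ker.mpr <| pow_apply_eq_zero_of_le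
      (Finset.le_sup (hS.mem_toFinset.mpr hv)) (hr v hv)
  exact this hu

lemma isNilpotent_restrict_of_locallyNilpotent {n : Module.End k V} (hn : LocallyNilpotent k n)
    {U : Submodule k V} [FiniteDimensional k U] (hU : ∀ u ∈ U, n u ∈ U) :
    IsNilpotent (n.restrict hU) := by
  obtain ⟨S, hSfin, hSspan⟩ := Submodule.fg_def.mp ((Module.Finite.iff_fg (N := U)).mp inferInstance)
  obtain ⟨R, hR⟩ := forall_pow_eq_zero_of_span hSfin (fun v _ => hn v)
  refine ⟨R, ?_⟩
  ext ⟨u, hu⟩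
  rw [Module.End.pow_restrict R hU]
  rw [LinearMap.restrict_apply]
  simpa using hR u (hSspan ▸ hu)

/-- A finite-dimensional subspace containing `v`, invariant under commuting `x` (locally finite)
and `n` (locally nilpotent). -/
lemma exists_invariant_findim {x n : Module.End k V} (hx : IsLocallyFinite k x)
    (hn : LocallyNilpotent k n) (hc : Commute x n) (v : V) :
    ∃ U : Submodule k V, v ∈ U ∧ FiniteDimensional k U ∧
      (∀ u ∈ U, x u ∈ U) ∧ (∀ u ∈ U, n u ∈ U) := by
  classical
  set G : ℕ × ℕ → V := fun p => (x ^ p.1) ((n ^ p.2) v) with hG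
  refine ⟨Submodule.span k (Set.range G), Submodule.subset_span ⟨(0, 0), by simp [hG]⟩, ?_, ?_, ?_⟩
  · -- finite dimensional
    obtain ⟨B, hB⟩ := hn v
    choose Us hUmem hUfin hUinv using fun b : Fin B => hx ((n ^ (b : ℕ)) v)
    refine Submodule.finiteDimensional_of_le (S₂ := ⨆ b : Fin B, Us b) ?_
    rw [Submodule.span_le]
    rintro - ⟨⟨a, b⟩, rfl⟩
    rcases lt_or_ge b B with hb | hb
    · have h1 : (n ^ b) v ∈ Us ⟨b, hb⟩ := hUmem ⟨b, hb⟩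
      have h2 : (x ^ a) ((n ^ b) v) ∈ Us ⟨b, hb⟩ :=
        Module.End.pow_apply_mem_of_forall_mem a (hUinv ⟨b, hb⟩) _ h1
      exact Submodule.mem_iSup_of_mem _ h2
    · have : (n ^ b) v = 0 := pow_apply_eq_zero_of_le hb hB
      simp [hG, this]
  · -- x-invariance
    intro u hu
    refine Submodule.span_induction (fun w hw => ?_) (by simp)
      (fun a b _ _ ha hb => by rw [map_add]; exact Submodule.add_mem _ ha hb)
      (fun c w _ hw => by rw [map_smul]; exact Submodule.smul_mem _ c hw) hu
    obtain ⟨⟨a, b⟩, rfl⟩ := hw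
    refine Submodule.subset_span ⟨(a + 1, b), ?_⟩
    show (x ^ (a + 1)) ((n ^ b) v) = x ((x ^ a) ((n ^ b) v))
    rw [pow_succ', Module.End.mul_apply]
  · -- n-invariance
    intro u hu
    refine Submodule.span_induction (fun w hw => ?_) (by simp)
      (fun a b _ _ ha hb => by rw [map_add]; exact Submodule.add_mem _ ha hb)
      (fun c w _ hw => by rw [map_smul]; exact Submodule.smul_mem _ c hw) hu
    obtain ⟨⟨a, b⟩, rfl⟩ := hw
    refine Submodule.subset_span ⟨(a, b + 1), ?_⟩
    have hcomm : n * x ^ a = x ^ a * n := (hc.symm.pow_right a).eq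
    show (x ^ a) ((n ^ (b + 1)) v) = n ((x ^ a) ((n ^ b) v))
    have : n ((x ^ a) ((n ^ b) v)) = (n * x ^ a) ((n ^ b) v) := rfl
    rw [this, hcomm, Module.End.mul_apply, pow_succ', Module.End.mul_apply]

end AnyField

section AnyField2

variable {k : Type*} [Field k] {V : Type*} [AddCommGroup V] [Module k V]
  {W : Type*} [AddCommGroup W] [Module k W]

/-- The semisimple part acts as `μ` on the generalized `μ`-eigenspace of `x`. -/
lemma semisimple_part_eigen {x s n : Module.End k V} (hx : IsLocallyFinite k x)
    (hn : LocallyNilpotent k n) (hsum : x = s + n) (hc : Commute s n)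
    (hss : s.IsSemisimple) {μ : k} {m : V} (hm : m ∈ x.maxGenEigenspace μ) :
    s m = μ • m := by
  have hxn : Commute x n := by rw [hsum]; exact (hc.add_left (Commute.refl n))
  have hxs : Commute x s := by rw [hsum]; exact ((Commute.refl s).add_left hc.symm)
  obtain ⟨U, hmU, hUfin, hUx, hUn⟩ := exists_invariant_findim hx hn hxn m
  have hUs : ∀ u ∈ U, s u ∈ U := by
    intro u hu
    have : s u = x u - n u := by rw [hsum]; simp
    rw [this]
    exact U.sub_mem (hUx u hu) (hUn u hu)
  set f : Module.End k U := x.restrict hUx with hf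
  set gg : Module.End k U := s.restrict hUs with hgg
  have hmf : (⟨m, hmU⟩ : U) ∈ f.maxGenEigenspace μ := by
    have := Module.End.genEigenspace_restrict x U ⊤ μ hUx
    rw [Module.End.maxGenEigenspace, this]
    simpa using hm
  have hcomm' : Commute f gg := LinearMap.restrict_commute hxs hUx hUs
  have hssg : gg.IsFinitelySemisimple := by
    have hinv : U ∈ s.invtSubmodule := by
      rw [Module.End.mem_invtSubmodule]
      intro u hu
      exact hUs u hu
    exact (hss.restrict hinv).isFinitelySemisimple
  have hnilfg : IsNilpotent (f - gg) := by
    have : f - gg = n.restrict hUn := by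
      rw [hf, hgg, LinearMap.restrict_sub hUx hUs]
      congr 1
      rw [hsum]; abel
    rw [this]
    exact isNilpotent_restrict_of_locallyNilpotent hn hUn
  have := Module.End.apply_eq_of_mem_of_comm_of_isFinitelySemisimple_of_isNil hmf hcomm' hssg hnilfg
  have hcoe := congrArg (Subtype.val) this
  exact hcoe

/-- For a locally finite endomorphism over an algebraically closed field, the generalized
eigenspaces span. -/
lemma iSup_maxGen_eq_top [IsAlgClosed k] {x : Module.End k V} (hx : IsLocallyFinite k x) :
    ⨆ μ, x.maxGenEigenspace μ = ⊤ := by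
  rw [Submodule.eq_top_iff']
  intro v
  obtain ⟨U, hvU, hUfin, hUx⟩ := hx v
  set f : Module.End k U := x.restrict hUx with hf
  have htop : (⟨v, hvU⟩ : U) ∈ ⨆ μ, f.maxGenEigenspace μ := by
    rw [Module.End.iSup_maxGenEigenspace_eq_top f]; trivial
  have : v = U.subtype ⟨v, hvU⟩ := rfl
  rw [this, ← Submodule.mem_comap]
  refine (iSup_le_iff.mpr (fun μ => ?_) : (⨆ μ, f.maxGenEigenspace μ) ≤ _) htop
  rw [Module.End.maxGenEigenspace, Module.End.genEigenspace_restrict x U ⊤ μ hUx]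
  exact Submodule.comap_mono (le_iSup (fun μ => x.maxGenEigenspace μ) μ)

lemma linearMap_ext_of_maxGen {x : Module.End k V} (h : ⨆ μ, x.maxGenEigenspace μ = ⊤)
    {P Q : V →ₗ[k] W} (hPQ : ∀ μ : k, ∀ m ∈ x.maxGenEigenspace μ, P m = Q m) : P = Q := by
  ext v
  have hv : v ∈ ⨆ μ, x.maxGenEigenspace μ := h ▸ Submodule.mem_top
  exact Submodule.iSup_induction (motive := fun v => P v = Q v) _ hv hPQ (by simp)
    (fun a b ha hb => by
      simp only [map_add]
      rw [show P a = Q a from ha, show P b = Q b from hb])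

lemma comp_pow_sub_smul {a : Module.End k V} {b : Module.End k W} {f : V →ₗ[k] W}
    (h : f ∘ₗ a = b ∘ₗ f) (μ : k) (r : ℕ) (v : V) :
    ((b - μ • 1) ^ r) (f v) = f (((a - μ • 1) ^ r) v) := by
  have hbase : ∀ w : V, (b - μ • 1) (f w) = f ((a - μ • 1) w) := by
    intro w
    have hcomm := congrArg (fun P => P w) h
    simp only [LinearMap.comp_apply] at hcomm
    simp [hcomm]
  induction r with
  | zero => simp
  | succ r ih =>
      rw [pow_succ', pow_succ', Module.End.mul_apply, Module.End.mul_apply, ih, hbase]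

lemma mem_maxGen_of_intertwine {a : Module.End k V} {b : Module.End k W} {f : V →ₗ[k] W}
    (h : f ∘ₗ a = b ∘ₗ f) {μ : k} {m : V} (hm : m ∈ a.maxGenEigenspace μ) :
    f m ∈ b.maxGenEigenspace μ := by
  rw [Module.End.mem_maxGenEigenspace] at hm ⊢
  obtain ⟨r, hr⟩ := hm
  exact ⟨r, by rw [comp_pow_sub_smul h μ r, hr, map_zero]⟩

end AnyField2

section AnyField3

variable {k : Type*} [Field k] {V : Type*} [AddCommGroup V] [Module k V]
  {W : Type*} [AddCommGroup W] [Module k W]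

lemma pow_apply_eigen {f : Module.End k V} {μ : k} {v : V} (hv : f v = μ • v) (r : ℕ) :
    (f ^ r) v = μ ^ r • v := by
  induction r with
  | zero => simp
  | succ r ih => rw [pow_succ', Module.End.mul_apply, ih, map_smul, hv, smul_smul, pow_succ]

lemma aeval_apply_eigen {f : Module.End k V} {μ : k} {v : V} (hv : f v = μ • v) (p : k[X]) :
    (Polynomial.aeval f p) v = p.eval μ • v := by
  induction p using Polynomial.induction_on' with
  | add p q hp hq => simp [hp, hq, add_smul]
  | monomial r c =>
      rw [Polynomial.aeval_monomial, Polynomial.eval_monomial]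
      simp only [Module.End.mul_apply, Module.algebraMap_end_apply]
      rw [pow_apply_eigen hv r, smul_smul]

/-- An endomorphism whose eigenvectors span is semisimple. -/
lemma isSemisimple_of_eigenspan {f : Module.End k V} (h : ⨆ μ, f.eigenspace μ = ⊤) :
    f.IsSemisimple := by
  refine IsSemisimpleModule.of_sSup_simples_eq_top ?_
  rw [Submodule.eq_top_iff']
  intro z
  have hz : (Module.AEval'.of f).symm z ∈ ⨆ μ, f.eigenspace μ := h ▸ Submodule.mem_top
  have main : ∀ w : V, w ∈ (⨆ μ, f.eigenspace μ) →
      Module.AEval'.of f w ∈ sSup {m : Submodule k[X] (Module.AEval' f) | IsSimpleModule k[X] m} := by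
    intro w hw
    refine Submodule.iSup_induction (motive := fun w => Module.AEval'.of f w ∈ sSup
      {m : Submodule k[X] (Module.AEval' f) | IsSimpleModule k[X] m}) _ hw ?_ (by simp) ?_
    · intro μ w hw
      rcases eq_or_ne w 0 with rfl | hw0
      · simp
      have hweig : f w = μ • w := Module.End.mem_eigenspace_iff.mp hw
      set L : Submodule k[X] (Module.AEval' f) := Submodule.span k[X] {Module.AEval'.of f w} with hL
      have hmemL : Module.AEval'.of f w ∈ L := Submodule.subset_span rfl
      have hLchar : ∀ z' ∈ L, ∃ c : k, z' = c • Module.AEval'.of f w := by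
        intro z' hz'
        obtain ⟨p, hp⟩ := Submodule.mem_span_singleton.mp hz'
        refine ⟨p.eval μ, ?_⟩
        rw [← hp]
        have : p • Module.AEval'.of f w = Module.AEval'.of f ((Polynomial.aeval f p) w) := by
          rw [← Module.AEval.of_aeval_smul]
          rfl
        rw [this, aeval_apply_eigen hweig, map_smul]
      have hsimple : IsSimpleModule k[X] L := by
        rw [isSimpleModule_iff_isAtom]
        constructor
        · intro hbot
          rw [hbot] at hmemL
          exact hw0 ((Module.AEval'.of f).map_eq_zero_iff.mp (by simpa using hmemL))
        · intro b hb
          by_contra hbne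
          obtain ⟨z', hz'b, hz'0⟩ := Submodule.exists_mem_ne_zero_of_ne_bot hbne
          obtain ⟨c, rfl⟩ := hLchar z' (hb.le hz'b)
          have hc : c ≠ 0 := by rintro rfl; simp at hz'0
          have : Module.AEval'.of f w ∈ b := by
            have := b.smul_mem (Polynomial.C c⁻¹) hz'b
            rwa [Module.AEval.C_smul, smul_smul, inv_mul_cancel₀ hc, one_smul] at this
          exact hb.ne (le_antisymm hb.le (by rwa [hL, Submodule.span_singleton_le_iff_mem]))
      exact le_sSup (show L ∈ {m : Submodule k[X] (Module.AEval' f) | IsSimpleModule k[X] m} from hsimple) hmemL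
    · intro a b ha hb
      rw [map_add]
      exact Submodule.add_mem _ ha hb
  have := main _ hz
  simpa using this

/-- Eigenvectors of `map S 1 + map 1 T` span, when the eigenvectors of `S` and `T` span. -/
lemma eigenspan_tensor {S : Module.End k V} {T : Module.End k W}
    (hS : ⨆ μ, S.eigenspace μ = ⊤) (hT : ⨆ μ, T.eigenspace μ = ⊤) :
    ⨆ μ, (TensorProduct.map S LinearMap.id +
      TensorProduct.map LinearMap.id T : Module.End k (V ⊗[k] W)).eigenspace μ = ⊤ := by
  set P : Module.End k (V ⊗[k] W) :=
    TensorProduct.map S LinearMap.id + TensorProduct.map LinearMap.id T with hP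
  rw [Submodule.eq_top_iff']
  intro z
  induction z using TensorProduct.induction_on with
  | zero => simp
  | add a b ha hb => exact Submodule.add_mem _ ha hb
  | tmul v w =>
      have hv : v ∈ ⨆ μ, S.eigenspace μ := hS ▸ Submodule.mem_top
      refine Submodule.iSup_induction (motive := fun v => v ⊗ₜ[k] w ∈ ⨆ μ, P.eigenspace μ) _ hv
        ?_ (by simp) ?_
      · intro μ v hvμ
        have hw : w ∈ ⨆ ν, T.eigenspace ν := hT ▸ Submodule.mem_top
        refine Submodule.iSup_induction (motive := fun w => v ⊗ₜ[k] w ∈ ⨆ μ, P.eigenspace μ) _ hw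
          ?_ (by simp) ?_
        · intro ν w hwν
          have h1 : S v = μ • v := Module.End.mem_eigenspace_iff.mp hvμ
          have h2 : T w = ν • w := Module.End.mem_eigenspace_iff.mp hwν
          have : P (v ⊗ₜ[k] w) = (μ + ν) • (v ⊗ₜ[k] w) := by
            have e1 : (μ • v) ⊗ₜ[k] w = μ • (v ⊗ₜ[k] w) := (TensorProduct.smul_tmul' μ v w).symm
            have e2 : v ⊗ₜ[k] (ν • w) = ν • (v ⊗ₜ[k] w) := TensorProduct.tmul_smul ν v w
            simp only [hP, LinearMap.add_apply, TensorProduct.map_tmul, LinearMap.id_apply,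
              h1, h2, e1, e2, add_smul]
          exact Submodule.mem_iSup_of_mem (μ + ν) (Module.End.mem_eigenspace_iff.mpr this)
        · intro a b ha hb
          rw [TensorProduct.tmul_add]
          exact Submodule.add_mem _ ha hb
      · intro a b ha hb
        rw [TensorProduct.add_tmul]
        exact Submodule.add_mem _ ha hb

lemma isLocallyFinite_of_locallyNilpotent {b : Module.End k V} (hb : LocallyNilpotent k b) :
    IsLocallyFinite k b := by
  intro w
  obtain ⟨r, hr⟩ := hb w
  refine ⟨Submodule.span k ((fun i : ℕ => (b ^ i) w) '' Set.Iic r), ?_, ?_, ?_⟩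
  · exact Submodule.subset_span ⟨0, by simp, by simp⟩
  · exact FiniteDimensional.span_of_finite k ((Set.finite_Iic r).image _)
  · intro u hu
    refine Submodule.span_induction (fun z hz => ?_) (by simp)
      (fun z₁ z₂ _ _ h₁ h₂ => by rw [map_add]; exact Submodule.add_mem _ h₁ h₂)
      (fun c z _ hc => by rw [map_smul]; exact Submodule.smul_mem _ c hc) hu
    obtain ⟨i, hi, rfl⟩ := hz
    rcases lt_or_eq_of_le (Set.mem_Iic.mp hi) with hlt | rfl
    · refine Submodule.subset_span ⟨i + 1, Set.mem_Iic.mpr hlt, ?_⟩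
      show (b ^ (i + 1)) w = b ((b ^ i) w)
      rw [pow_succ', Module.End.mul_apply]
    · show b ((b ^ i) w) ∈ _
      rw [hr, map_zero]
      exact Submodule.zero_mem _

lemma locallyNilpotent_add {a b : Module.End k V} (hab : Commute a b)
    (ha : LocallyNilpotent k a) (hb : LocallyNilpotent k b) : LocallyNilpotent k (a + b) := by
  intro v
  obtain ⟨U, hvU, hUfin, hUb, hUa⟩ :=
    exists_invariant_findim (isLocallyFinite_of_locallyNilpotent hb) ha hab.symm v
  have hUab : ∀ u ∈ U, (a + b) u ∈ U := fun u hu => by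
    rw [LinearMap.add_apply]; exact U.add_mem (hUa u hu) (hUb u hu)
  have hna : IsNilpotent (a.restrict hUa) := isNilpotent_restrict_of_locallyNilpotent ha hUa
  have hnb : IsNilpotent (b.restrict hUb) := isNilpotent_restrict_of_locallyNilpotent hb hUb
  have hcr : Commute (a.restrict hUa) (b.restrict hUb) := LinearMap.restrict_commute hab hUa hUb
  have hsum : (a + b).restrict hUab = a.restrict hUa + b.restrict hUb := by
    ext u; simp [LinearMap.restrict_apply]
  have : IsNilpotent ((a + b).restrict hUab) := by
    rw [hsum]; exact hcr.isNilpotent_add hna hnb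
  obtain ⟨r, hrr⟩ := this
  refine ⟨r, ?_⟩
  have := congrArg (fun P => P ⟨v, hvU⟩) hrr
  rw [Module.End.pow_restrict r hUab] at this
  simpa [LinearMap.restrict_apply, Subtype.ext_iff] using this

end AnyField3

section AnyField4

variable {k : Type*} [Field k] {V : Type*} [AddCommGroup V] [Module k V]
  {W : Type*} [AddCommGroup W] [Module k W]

lemma isLocallyFinite_of_spanning {f : Module.End k V} {S : Set V}
    (hspan : Submodule.span k S = ⊤)
    (h : ∀ v ∈ S, ∃ U : Submodule k V, v ∈ U ∧ FiniteDimensional k U ∧ ∀ u ∈ U, f u ∈ U) :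
    IsLocallyFinite k f := by
  set G : Submodule k V :=
    { carrier := {v | ∃ U : Submodule k V, v ∈ U ∧ FiniteDimensional k U ∧ ∀ u ∈ U, f u ∈ U}
      add_mem' := by
        rintro a b ⟨U, haU, hUfin, hUinv⟩ ⟨U', hbU, hU'fin, hU'inv⟩
        refine ⟨U ⊔ U', Submodule.add_mem_sup haU hbU, inferInstance, ?_⟩
        intro u hu
        obtain ⟨u₁, hu₁, u₂, hu₂, rfl⟩ := Submodule.mem_sup.mp hu
        rw [map_add]
        exact Submodule.add_mem_sup (hUinv u₁ hu₁) (hU'inv u₂ hu₂)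
      zero_mem' := ⟨⊥, Submodule.zero_mem ⊥, inferInstance, by simp⟩
      smul_mem' := by
        rintro c a ⟨U, haU, hUfin, hUinv⟩
        exact ⟨U, U.smul_mem c haU, hUfin, hUinv⟩ } with hG
  intro v
  have : v ∈ G := by
    have hle : Submodule.span k S ≤ G := Submodule.span_le.mpr (fun w hw => h w hw)
    exact hle (hspan ▸ Submodule.mem_top)
  exact this

lemma locallyNilpotent_of_spanning {f : Module.End k V} {S : Set V}
    (hspan : Submodule.span k S = ⊤) (h : ∀ v ∈ S, ∃ r : ℕ, (f ^ r) v = 0) :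
    LocallyNilpotent k f := by
  set G : Submodule k V :=
    { carrier := {v | ∃ r : ℕ, (f ^ r) v = 0}
      add_mem' := by
        rintro a b ⟨r, hr⟩ ⟨r', hr'⟩
        refine ⟨max r r', ?_⟩
        rw [map_add, pow_apply_eq_zero_of_le (le_max_left r r') hr,
          pow_apply_eq_zero_of_le (le_max_right r r') hr', add_zero]
      zero_mem' := ⟨0, by simp⟩
      smul_mem' := by
        rintro c a ⟨r, hr⟩
        exact ⟨r, by rw [map_smul, hr, smul_zero]⟩ } with hG
  intro v
  have : v ∈ G := by
    have hle : Submodule.span k S ≤ G := Submodule.span_le.mpr (fun w hw => h w hw)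
    exact hle (hspan ▸ Submodule.mem_top)
  exact this

lemma isLocallyFinite_sub_of_locallyNilpotent {x n : Module.End k V} (hx : IsLocallyFinite k x)
    (hn : LocallyNilpotent k n) (hc : Commute x n) : IsLocallyFinite k (x - n) := by
  intro v
  obtain ⟨U, hvU, hUfin, hUx, hUn⟩ := exists_invariant_findim hx hn hc v
  exact ⟨U, hvU, hUfin, fun u hu => by
    rw [LinearMap.sub_apply]; exact U.sub_mem (hUx u hu) (hUn u hu)⟩

lemma eigenspan_of_isSemisimple [IsAlgClosed k] {s : Module.End k V} (hss : s.IsSemisimple)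
    (hlf : IsLocallyFinite k s) : ⨆ μ, s.eigenspace μ = ⊤ := by
  have h0 : LocallyNilpotent k (0 : Module.End k V) := fun v => ⟨1, by simp⟩
  refine le_antisymm le_top ?_
  rw [← iSup_maxGen_eq_top hlf]
  refine iSup_mono fun μ => fun m hm => ?_
  exact Module.End.mem_eigenspace_iff.mpr
    (semisimple_part_eigen hlf h0 (by simp) (Commute.zero_right s) hss hm)

/-- Local finiteness of `map x id + map id y`. -/
lemma isLocallyFinite_tensor {x : Module.End k V} {y : Module.End k W}
    (hx : IsLocallyFinite k x) (hy : IsLocallyFinite k y) :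
    IsLocallyFinite k (TensorProduct.map x LinearMap.id + TensorProduct.map LinearMap.id y) := by
  refine isLocallyFinite_of_spanning (TensorProduct.span_tmul_eq_top k V W) ?_
  rintro - ⟨v, w, rfl⟩
  obtain ⟨U, hvU, hUfin, hUx⟩ := hx v
  obtain ⟨U', hwU, hU'fin, hU'y⟩ := hy w
  set ι₁ := U.subtype
  set ι₂ := U'.subtype
  refine ⟨LinearMap.range (TensorProduct.map ι₁ ι₂), ⟨(⟨v, hvU⟩ : U) ⊗ₜ[k] (⟨w, hwU⟩ : U'), rfl⟩,
    inferInstance, ?_⟩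
  rintro - ⟨z, rfl⟩
  rw [LinearMap.add_apply]
  refine Submodule.add_mem _ ?_ ?_
  · have hcomp : TensorProduct.map x LinearMap.id ∘ₗ TensorProduct.map ι₁ ι₂
        = TensorProduct.map ι₁ ι₂ ∘ₗ TensorProduct.map (x.restrict hUx) LinearMap.id := by
      rw [← TensorProduct.map_comp, ← TensorProduct.map_comp]
      congr 1 <;> ext u <;> simp [ι₁, ι₂, LinearMap.restrict_apply]
    have := congrArg (fun P => P z) hcomp
    simp only [LinearMap.comp_apply] at this
    rw [this]
    exact ⟨_, rfl⟩
  · have hcomp : TensorProduct.map LinearMap.id y ∘ₗ TensorProduct.map ι₁ ι₂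
        = TensorProduct.map ι₁ ι₂ ∘ₗ TensorProduct.map LinearMap.id (y.restrict hU'y) := by
      rw [← TensorProduct.map_comp, ← TensorProduct.map_comp]
      congr 1 <;> ext u <;> simp [ι₁, ι₂, LinearMap.restrict_apply]
    have := congrArg (fun P => P z) hcomp
    simp only [LinearMap.comp_apply] at this
    rw [this]
    exact ⟨_, rfl⟩

/-- Local nilpotency of `map n id + map id m`. -/
lemma locallyNilpotent_tensor {n : Module.End k V} {m : Module.End k W}
    (hn : LocallyNilpotent k n) (hm : LocallyNilpotent k m) :
    LocallyNilpotent k (TensorProduct.map n LinearMap.id + TensorProduct.map LinearMap.id m) := by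
  have hcomm : Commute (TensorProduct.map n (LinearMap.id : W →ₗ[k] W))
      (TensorProduct.map (LinearMap.id : V →ₗ[k] V) m) := by
    unfold Commute SemiconjBy
    rw [Module.End.mul_eq_comp, Module.End.mul_eq_comp, ← TensorProduct.map_comp,
      ← TensorProduct.map_comp]
    simp
  refine locallyNilpotent_add hcomm ?_ ?_
  · refine locallyNilpotent_of_spanning (TensorProduct.span_tmul_eq_top k V W) ?_
    rintro - ⟨v, w, rfl⟩
    obtain ⟨r, hr⟩ := hn v
    refine ⟨r, ?_⟩
    rw [TensorProduct.map_pow]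
    simp [TensorProduct.map_tmul, hr]
  · refine locallyNilpotent_of_spanning (TensorProduct.span_tmul_eq_top k V W) ?_
    rintro - ⟨v, w, rfl⟩
    obtain ⟨r, hr⟩ := hm w
    refine ⟨r, ?_⟩
    rw [TensorProduct.map_pow]
    simp [TensorProduct.map_tmul, hr]

end AnyField4

section BaseChange

variable {F : Type u} [Field F] [CharZero F] {V : Type*} [AddCommGroup V] [Module F V]
  {W : Type*} [AddCommGroup W] [Module F W]

lemma one_tmul_eq_zero {v : V} (h : (1 : AlgebraicClosure F) ⊗ₜ[F] v = 0) : v = 0 := by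
  set b := Basis.ofVectorSpace F V
  have hrep : ∀ i, b.repr v i = 0 := by
    intro i
    have := congrArg (fun z => (b.baseChange (AlgebraicClosure F)).repr z i) h
    simp only [map_zero, Finsupp.coe_zero, Pi.zero_apply] at this
    rw [Basis.baseChange_repr_tmul] at this
    have h2 : (algebraMap F (AlgebraicClosure F)) (b.repr v i) = 0 := by
      rw [Algebra.algebraMap_eq_smul_one]; exact this
    exact (algebraMap F (AlgebraicClosure F)).injective (by simpa using h2)
  have : b.repr v = 0 := Finsupp.ext hrep
  simpa using congrArg b.repr.symm this

lemma baseChange_inj {f g : V →ₗ[F] W}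
    (h : f.baseChange (AlgebraicClosure F) = g.baseChange (AlgebraicClosure F)) : f = g := by
  ext v
  have := congrArg (fun P => P ((1 : AlgebraicClosure F) ⊗ₜ[F] v)) h
  simp only [LinearMap.baseChange_tmul] at this
  have hsub : (1 : AlgebraicClosure F) ⊗ₜ[F] (f v - g v) = 0 := by
    rw [TensorProduct.tmul_sub, this, sub_self]
  have := one_tmul_eq_zero hsub
  exact sub_eq_zero.mp this

lemma baseChange_fixes {U : Submodule F V} {P : V →ₗ[F] V} (hP : ∀ u ∈ U, P u = u) :
    ∀ z ∈ U.baseChange (AlgebraicClosure F), (P.baseChange (AlgebraicClosure F)) z = z := by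
  intro z hz
  have : U.baseChange (AlgebraicClosure F) ≤
      LinearMap.ker (P.baseChange (AlgebraicClosure F) - LinearMap.id) := by
    rw [Submodule.baseChange_eq_span, Submodule.span_le]
    rintro - ⟨u, hu, rfl⟩
    simp [LinearMap.baseChange_tmul, hP u hu, TensorProduct.mk_apply]
  have := this hz
  rw [LinearMap.mem_ker, LinearMap.sub_apply, LinearMap.id_apply, sub_eq_zero] at this
  exact this

lemma mem_of_tmul_mem_baseChange {U : Submodule F V} {v : V}
    (h : (1 : AlgebraicClosure F) ⊗ₜ[F] v ∈ U.baseChange (AlgebraicClosure F)) : v ∈ U := by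
  obtain ⟨q, hq⟩ := Submodule.exists_isCompl U
  set P : V →ₗ[F] V := U.subtype ∘ₗ (Submodule.linearProjOfIsCompl U q hq) with hPdef
  have hP : ∀ u ∈ U, P u = u := by
    intro u hu
    simp [hPdef, Submodule.linearProjOfIsCompl_apply_left hq ⟨u, hu⟩]
    exact congrArg Subtype.val (Submodule.linearProjOfIsCompl_apply_left hq ⟨u, hu⟩)
  have hfix := baseChange_fixes hP _ h
  rw [LinearMap.baseChange_tmul] at hfix
  have : P v = v := by
    have hsub : (1 : AlgebraicClosure F) ⊗ₜ[F] (P v - v) = 0 := by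
      rw [TensorProduct.tmul_sub, hfix, sub_self]
    exact sub_eq_zero.mp (one_tmul_eq_zero hsub)
  rw [← this]
  exact Submodule.coe_mem _

lemma baseChange_mapsTo {U : Submodule F V} {f : Module.End F V} (hU : ∀ u ∈ U, f u ∈ U) :
    ∀ z ∈ U.baseChange (AlgebraicClosure F),
      (f.baseChange (AlgebraicClosure F)) z ∈ U.baseChange (AlgebraicClosure F) := by
  intro z hz
  have : U.baseChange (AlgebraicClosure F) ≤
      Submodule.comap (f.baseChange (AlgebraicClosure F)) (U.baseChange (AlgebraicClosure F)) := by
    conv_lhs => rw [Submodule.baseChange_eq_span]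
    rw [Submodule.span_le]
    rintro - ⟨u, hu, rfl⟩
    simp only [SetLike.mem_coe, Submodule.mem_comap, TensorProduct.mk_apply, LinearMap.baseChange_tmul]
    exact Submodule.tmul_mem_baseChange_of_mem (1 : AlgebraicClosure F) (hU u hu)
  exact this hz

lemma finiteDimensional_baseChange (U : Submodule F V) [FiniteDimensional F U] :
    FiniteDimensional (AlgebraicClosure F) (U.baseChange (AlgebraicClosure F)) := by
  obtain ⟨S, hSfin, hSspan⟩ := Submodule.fg_def.mp ((Module.Finite.iff_fg (N := U)).mp inferInstance)
  rw [← hSspan, Submodule.baseChange_span]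
  exact FiniteDimensional.span_of_finite _ (hSfin.image _)

lemma span_tmul_scalars_eq_top :
    Submodule.span (AlgebraicClosure F)
      {z : (AlgebraicClosure F) ⊗[F] V | ∃ c v, c ⊗ₜ[F] v = z} = ⊤ := by
  rw [Submodule.eq_top_iff']
  intro z
  induction z using TensorProduct.induction_on with
  | zero => simp
  | add a b ha hb => exact Submodule.add_mem _ ha hb
  | tmul c v => exact Submodule.subset_span ⟨c, v, rfl⟩

lemma isLocallyFinite_baseChange {x : Module.End F V} (hx : IsLocallyFinite F x) :
    IsLocallyFinite (AlgebraicClosure F) (x.baseChange (AlgebraicClosure F)) := by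
  refine isLocallyFinite_of_spanning span_tmul_scalars_eq_top ?_
  rintro - ⟨c, v, rfl⟩
  obtain ⟨U, hvU, hUfin, hUx⟩ := hx v
  exact ⟨U.baseChange (AlgebraicClosure F), Submodule.tmul_mem_baseChange_of_mem c hvU,
    finiteDimensional_baseChange U, baseChange_mapsTo hUx⟩

lemma locallyNilpotent_baseChange {n : Module.End F V} (hn : LocallyNilpotent F n) :
    LocallyNilpotent (AlgebraicClosure F) (n.baseChange (AlgebraicClosure F)) := by
  refine locallyNilpotent_of_spanning span_tmul_scalars_eq_top ?_
  rintro - ⟨c, v, rfl⟩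
  obtain ⟨r, hr⟩ := hn v
  refine ⟨r, ?_⟩
  rw [← LinearMap.baseChange_pow, LinearMap.baseChange_tmul, hr, TensorProduct.tmul_zero]

section JCData

variable {x s n : Module.End F V}

lemma commute_xn (hsum : x = s + n) (hc : Commute s n) : Commute x n := by
  rw [hsum]; exact hc.add_left (Commute.refl n)

lemma bc_commute (hc : Commute s n) :
    Commute (s.baseChange (AlgebraicClosure F)) (n.baseChange (AlgebraicClosure F)) := by
  unfold Commute SemiconjBy
  rw [← LinearMap.baseChange_mul, ← LinearMap.baseChange_mul, hc.eq]

lemma bc_maxGen_smul (hlf : IsLocallyFinite F x) (hn : LocallyNilpotent F n)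
    (hsum : x = s + n) (hc : Commute s n) (hss : IsAbsSemisimple F s) {μ : AlgebraicClosure F}
    {m : (AlgebraicClosure F) ⊗[F] V}
    (hm : m ∈ Module.End.maxGenEigenspace (x.baseChange (AlgebraicClosure F)) μ) :
    (s.baseChange (AlgebraicClosure F)) m = μ • m := by
  refine semisimple_part_eigen (isLocallyFinite_baseChange hlf) (locallyNilpotent_baseChange hn)
    ?_ (bc_commute hc) hss hm
  rw [hsum, LinearMap.baseChange_add]

lemma bc_span (hlf : IsLocallyFinite F x) :
    ⨆ μ, Module.End.maxGenEigenspace (x.baseChange (AlgebraicClosure F)) μ = ⊤ :=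
  iSup_maxGen_eq_top (isLocallyFinite_baseChange hlf)

/-- Uniqueness of the Jordan–Chevalley decomposition of a locally finite endomorphism. -/
lemma jc_unique {s' n' : Module.End F V} (hlf : IsLocallyFinite F x)
    (hn : LocallyNilpotent F n) (hsum : x = s + n) (hc : Commute s n)
    (hss : IsAbsSemisimple F s)
    (hn' : LocallyNilpotent F n') (hsum' : x = s' + n') (hc' : Commute s' n')
    (hss' : IsAbsSemisimple F s') : s = s' := by
  refine baseChange_inj (F := F) ?_
  refine linearMap_ext_of_maxGen (bc_span hlf) (fun μ m hm => ?_)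
  rw [bc_maxGen_smul hlf hn hsum hc hss hm, bc_maxGen_smul hlf hn' hsum' hc' hss' hm]

/-- Naturality of the semisimple part. -/
lemma jc_natural {y t m' : Module.End F W} (hlf : IsLocallyFinite F x)
    (hn : LocallyNilpotent F n) (hsum : x = s + n) (hc : Commute s n)
    (hss : IsAbsSemisimple F s)
    (hlf' : IsLocallyFinite F y) (hm' : LocallyNilpotent F m') (hsum' : y = t + m')
    (hc' : Commute t m') (hss' : IsAbsSemisimple F t)
    (f : V →ₗ[F] W) (hf : f ∘ₗ x = y ∘ₗ f) : f ∘ₗ s = t ∘ₗ f := by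
  refine baseChange_inj (F := F) ?_
  rw [LinearMap.baseChange_comp, LinearMap.baseChange_comp]
  refine linearMap_ext_of_maxGen (bc_span hlf) (fun μ m hm => ?_)
  have hbcf : f.baseChange (AlgebraicClosure F) ∘ₗ x.baseChange (AlgebraicClosure F)
      = y.baseChange (AlgebraicClosure F) ∘ₗ f.baseChange (AlgebraicClosure F) := by
    rw [← LinearMap.baseChange_comp, ← LinearMap.baseChange_comp, hf]
  have hfm : (f.baseChange (AlgebraicClosure F)) m
      ∈ Module.End.maxGenEigenspace (y.baseChange (AlgebraicClosure F)) μ :=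
    mem_maxGen_of_intertwine hbcf hm
  simp only [LinearMap.comp_apply]
  rw [bc_maxGen_smul hlf hn hsum hc hss hm, map_smul,
    bc_maxGen_smul hlf' hm' hsum' hc' hss' hfm]

/-- The semisimple part preserves invariant subspaces. -/
lemma jc_apply_mem (hlf : IsLocallyFinite F x) (hn : LocallyNilpotent F n)
    (hsum : x = s + n) (hc : Commute s n) (hss : IsAbsSemisimple F s)
    {U : Submodule F V} (hU : ∀ u ∈ U, x u ∈ U) {v : V} (hv : v ∈ U) : s v ∈ U := by
  set U₀ : Submodule F V := Submodule.span F (Set.range fun r : ℕ => (x ^ r) v) with hU₀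
  have hvU₀ : v ∈ U₀ := Submodule.subset_span ⟨0, by simp⟩
  have hU₀x : ∀ u ∈ U₀, x u ∈ U₀ := by
    intro u hu
    refine Submodule.span_induction (fun z hz => ?_) (by simp)
      (fun a b _ _ ha hb => by rw [map_add]; exact Submodule.add_mem _ ha hb)
      (fun c z _ hc' => by rw [map_smul]; exact Submodule.smul_mem _ c hc') hu
    obtain ⟨r, rfl⟩ := hz
    refine Submodule.subset_span ⟨r + 1, ?_⟩
    show (x ^ (r + 1)) v = x ((x ^ r) v)
    rw [pow_succ', Module.End.mul_apply]
  have hU₀le : U₀ ≤ U := by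
    rw [hU₀, Submodule.span_le]
    rintro - ⟨r, rfl⟩
    exact Module.End.pow_apply_mem_of_forall_mem r hU v hv
  have hU₀fin : FiniteDimensional F U₀ := by
    obtain ⟨Uf, hvUf, hUffin, hUfx⟩ := hlf v
    refine Submodule.finiteDimensional_of_le (S₂ := Uf) ?_
    rw [hU₀, Submodule.span_le]
    rintro - ⟨r, rfl⟩
    exact Module.End.pow_apply_mem_of_forall_mem r hUfx v hvUf
  -- base change
  set Ub := U₀.baseChange (AlgebraicClosure F) with hUb
  have hUbfin : FiniteDimensional (AlgebraicClosure F) Ub := finiteDimensional_baseChange U₀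
  have hUbx : ∀ z ∈ Ub, (x.baseChange (AlgebraicClosure F)) z ∈ Ub := baseChange_mapsTo hU₀x
  have hclaim : ∀ z ∈ Ub, (s.baseChange (AlgebraicClosure F)) z ∈ Ub := by
    intro z hz
    set fb : Module.End (AlgebraicClosure F) Ub :=
      (x.baseChange (AlgebraicClosure F)).restrict hUbx with hfb
    have htop : (⟨z, hz⟩ : Ub) ∈ ⨆ μ, fb.maxGenEigenspace μ := by
      rw [Module.End.iSup_maxGenEigenspace_eq_top (K := AlgebraicClosure F) (V := Ub) fb]; trivial
    refine Submodule.iSup_induction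
      (motive := fun zz : Ub => (s.baseChange (AlgebraicClosure F)) (zz : _) ∈ Ub) _ htop ?_
      (by simp) ?_
    · intro μ w hw
      have hwmem : (w : (AlgebraicClosure F) ⊗[F] V)
          ∈ Module.End.maxGenEigenspace (x.baseChange (AlgebraicClosure F)) μ := by
        have := Module.End.genEigenspace_restrict (x.baseChange (AlgebraicClosure F)) Ub ⊤ μ hUbx
        rw [Module.End.maxGenEigenspace, this, Submodule.mem_comap] at hw
        exact hw
      rw [bc_maxGen_smul hlf hn hsum hc hss hwmem]
      exact Ub.smul_mem μ w.2
    · intro a b ha hb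
      rw [Submodule.coe_add, map_add]
      exact Ub.add_mem ha hb
  have h1 : (s.baseChange (AlgebraicClosure F)) ((1 : AlgebraicClosure F) ⊗ₜ[F] v) ∈ Ub :=
    hclaim _ (Submodule.tmul_mem_baseChange_of_mem 1 hvU₀)
  rw [LinearMap.baseChange_tmul] at h1
  exact hU₀le (mem_of_tmul_mem_baseChange h1)

lemma jc_zero (hlf : IsLocallyFinite F x) (hn : LocallyNilpotent F n)
    (hsum : x = s + n) (hc : Commute s n) (hss : IsAbsSemisimple F s) (hx0 : x = 0) :
    s = 0 := by
  refine baseChange_inj (F := F) ?_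
  refine LinearMap.ext fun z => ?_
  have hz : z ∈ Module.End.maxGenEigenspace (x.baseChange (AlgebraicClosure F)) 0 := by
    rw [Module.End.mem_maxGenEigenspace]
    refine ⟨1, ?_⟩
    simp [hx0]
  have := bc_maxGen_smul hlf hn hsum hc hss hz
  simpa using this

end JCData

lemma distrib_tmul (c : AlgebraicClosure F) (v : V) (w : W) :
    TensorProduct.AlgebraTensorModule.distribBaseChange F (AlgebraicClosure F) V W
      (c ⊗ₜ[F] (v ⊗ₜ[F] w)) = (c ⊗ₜ[F] v) ⊗ₜ[AlgebraicClosure F] ((1 : AlgebraicClosure F) ⊗ₜ[F] w) := by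
  rw [← LinearEquiv.eq_symm_apply]
  simp [TensorProduct.AlgebraTensorModule.distribBaseChange]

lemma distrib_conj (f : Module.End F V) (g : Module.End F W) :
    (TensorProduct.AlgebraTensorModule.distribBaseChange F (AlgebraicClosure F) V W).toLinearMap
        ∘ₗ (TensorProduct.map f g).baseChange (AlgebraicClosure F)
      = TensorProduct.map (f.baseChange (AlgebraicClosure F)) (g.baseChange (AlgebraicClosure F))
        ∘ₗ (TensorProduct.AlgebraTensorModule.distribBaseChange F (AlgebraicClosure F) V W).toLinearMap := by
  refine LinearMap.ext fun z => ?_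
  show (TensorProduct.AlgebraTensorModule.distribBaseChange F (AlgebraicClosure F) V W)
      (((TensorProduct.map f g).baseChange (AlgebraicClosure F)) z)
    = TensorProduct.map (f.baseChange (AlgebraicClosure F)) (g.baseChange (AlgebraicClosure F))
      ((TensorProduct.AlgebraTensorModule.distribBaseChange F (AlgebraicClosure F) V W) z)
  induction z using TensorProduct.induction_on with
  | zero => simp
  | add a b ha hb => rw [map_add, map_add, map_add, map_add, ha, hb]
  | tmul c m =>
      induction m using TensorProduct.induction_on with
      | zero => rw [TensorProduct.tmul_zero]; simp
      | add m₁ m₂ h₁ h₂ =>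
          rw [TensorProduct.tmul_add, map_add, map_add, map_add, map_add, h₁, h₂]
      | tmul v w =>
          rw [LinearMap.baseChange_tmul, TensorProduct.map_tmul, distrib_tmul, distrib_tmul,
            TensorProduct.map_tmul, LinearMap.baseChange_tmul, LinearMap.baseChange_tmul]

/-- The key tensor-product semisimplicity lemma. -/
lemma isAbsSemisimple_tensorOp {s : Module.End F V} {t : Module.End F W}
    (hs_lf : IsLocallyFinite F s) (ht_lf : IsLocallyFinite F t)
    (hss : IsAbsSemisimple F s) (hts : IsAbsSemisimple F t) :
    IsAbsSemisimple F (TensorProduct.map s LinearMap.id + TensorProduct.map LinearMap.id t :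
      Module.End F (V ⊗[F] W)) := by
  have hSspan := eigenspan_of_isSemisimple hss (isLocallyFinite_baseChange hs_lf)
  have hTspan := eigenspan_of_isSemisimple hts (isLocallyFinite_baseChange ht_lf)
  have hPK : (TensorProduct.map (s.baseChange (AlgebraicClosure F)) LinearMap.id +
      TensorProduct.map LinearMap.id (t.baseChange (AlgebraicClosure F)) :
      Module.End (AlgebraicClosure F)
        (((AlgebraicClosure F) ⊗[F] V) ⊗[AlgebraicClosure F] ((AlgebraicClosure F) ⊗[F] W))).IsSemisimple :=
    isSemisimple_of_eigenspan (eigenspan_tensor hSspan hTspan)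
  refine (LinearEquiv.isSemisimple_iff _ _
    (TensorProduct.AlgebraTensorModule.distribBaseChange F (AlgebraicClosure F) V W) ?_).mpr hPK
  rw [LinearMap.baseChange_add, LinearMap.comp_add, LinearMap.add_comp]
  congr 1
  · have h1 : (TensorProduct.map s (LinearMap.id : W →ₗ[F] W)).baseChange (AlgebraicClosure F)
        = (TensorProduct.map s (LinearMap.id : W →ₗ[F] W)).baseChange (AlgebraicClosure F) := rfl
    have := distrib_conj s (LinearMap.id : W →ₗ[F] W)
    rw [this]
    congr 2
    exact LinearMap.baseChange_id
  · have := distrib_conj (LinearMap.id : V →ₗ[F] V) t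
    rw [this]
    congr 2
    exact LinearMap.baseChange_id

end BaseChange

end JCAux

variable {F : Type u} [Field F] [CharZero F] {g : Type v} [LieRing g] [LieAlgebra F g]

/-- **The additive Jordan–Chevalley decomposition in `Lie(M)`.**
Let `x ∈ Lie(M)` be locally finite, and suppose that for every object `V` of `C` the semisimple
part `s_V` and the locally nilpotent part `n_V` of the additive Jordan–Chevalley decomposition
of `x_V` lie in `End_{V^du}(V)`.  Then `s = (s_V)_V` is a semisimple element of `Lie(M)`,
`n = (n_V)_V` is a locally nilpotent element of `Lie(M)`, `x = s + n`, `[s, n] = 0`, and `s`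
and `n` are uniquely determined by these properties. -/
theorem stmt_10 (D : TannakaSetting F g) (HG : D.IsGoodSetting)
    (x : ∀ i, Module.End F (D.V i)) (hx : x ∈ D.LieM)
    (hlf : ∀ i, IsLocallyFinite F (x i))
    (s n : ∀ i, Module.End F (D.V i))
    (hsum : ∀ i, x i = s i + n i)
    (hcomm : ∀ i, s i * n i = n i * s i)
    (hss : ∀ i, IsAbsSemisimple F (s i))
    (hnil : ∀ i, LocallyNilpotent F (n i))
    (hsdu : ∀ i, D.PreservesDu i (s i))
    (hndu : ∀ i, D.PreservesDu i (n i)) :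
    s ∈ D.LieM ∧ n ∈ D.LieM ∧ x = s + n ∧ s * n = n * s ∧
    (∀ s' n' : ∀ i, Module.End F (D.V i), s' ∈ D.LieM → n' ∈ D.LieM →
      (∀ i, IsAbsSemisimple F (s' i)) → (∀ i, LocallyNilpotent F (n' i)) →
      x = s' + n' → s' * n' = n' * s' → s' = s ∧ n' = n) := by
  classical
  open JCAux in
  -- basic per-object facts
  have hn_eq : ∀ i, n i = x i - s i := fun i => by rw [hsum i]; abel
  have hs_eq : ∀ i, s i = x i - n i := fun i => by rw [hsum i]; abel
  have hxn : ∀ i, Commute (x i) (n i) := fun i => commute_xn (hsum i) (hcomm i)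
  have hslf : ∀ i, IsLocallyFinite F (s i) := fun i => by
    rw [hs_eq i]
    exact isLocallyFinite_sub_of_locallyNilpotent (hlf i) (hnil i) (hxn i)
  -- naturality of s
  have hnat : ∀ (i j : D.ι) (f : D.V i →ₗ[F] D.V j), D.IsHom f →
      f ∘ₗ s i = s j ∘ₗ f := by
    intro i j f hf
    exact jc_natural (hlf i) (hnil i) (hsum i) (hcomm i) (hss i)
      (hlf j) (hnil j) (hsum j) (hcomm j) (hss j) f (hx.1.2 i j f hf)
  -- invariant subspaces
  have hpoly : ∀ (i : D.ι) (U : Submodule F (D.V i)), (∀ u ∈ U, x i u ∈ U) →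
      ∀ v ∈ U, s i v ∈ U := by
    intro i U hU v hv
    exact jc_apply_mem (hlf i) (hnil i) (hsum i) (hcomm i) (hss i) hU hv
  -- tensor condition for s
  have htens : ∀ (i j k : D.ι) (e : D.V k ≃ₗ[F] (D.V i ⊗[F] D.V j)), D.IsTensorProd i j k e →
      e.toLinearMap ∘ₗ s k =
        (TensorProduct.map (s i) LinearMap.id + TensorProduct.map LinearMap.id (s j)) ∘ₗ
          e.toLinearMap := by
    intro i j k e he
    have hxe := hx.2.1 i j k e he
    set xT : Module.End F (D.V i ⊗[F] D.V j) :=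
      TensorProduct.map (x i) LinearMap.id + TensorProduct.map LinearMap.id (x j) with hxT
    set sT : Module.End F (D.V i ⊗[F] D.V j) :=
      TensorProduct.map (s i) LinearMap.id + TensorProduct.map LinearMap.id (s j) with hsT
    set nT : Module.End F (D.V i ⊗[F] D.V j) :=
      TensorProduct.map (n i) LinearMap.id + TensorProduct.map LinearMap.id (n j) with hnT
    have hmulmap : ∀ (a c : Module.End F (D.V i)) (b d : Module.End F (D.V j)),
        (TensorProduct.map a b) * (TensorProduct.map c d) = TensorProduct.map (a * c) (b * d) := by
      intro a c b d
      rw [Module.End.mul_eq_comp, ← TensorProduct.map_comp, Module.End.mul_eq_comp,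
        Module.End.mul_eq_comp]
    have hlfT : IsLocallyFinite F xT := isLocallyFinite_tensor (hlf i) (hlf j)
    have hnTn : LocallyNilpotent F nT := locallyNilpotent_tensor (hnil i) (hnil j)
    have hsumT : xT = sT + nT := by
      rw [hxT, hsT, hnT, hsum i, hsum j, TensorProduct.map_add_left,
        TensorProduct.map_add_right]
      abel
    have hcT : Commute sT nT := by
      show sT * nT = nT * sT
      rw [hsT, hnT, add_mul, mul_add, mul_add, add_mul, mul_add, mul_add]
      simp only [hmulmap]
      have e1 : s i * n i = n i * s i := hcomm i
      have e2 : s j * n j = n j * s j := hcomm j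
      rw [e1, e2]
      have c1 : (s i) * 1 = 1 * (s i) := by rw [mul_one, one_mul]
      simp only [Module.End.mul_eq_comp, LinearMap.comp_id, LinearMap.id_comp]
      abel
    have hssT : IsAbsSemisimple F sT :=
      isAbsSemisimple_tensorOp (hslf i) (hslf j) (hss i) (hss j)
    exact jc_natural (hlf k) (hnil k) (hsum k) (hcomm k) (hss k)
      hlfT hnTn hsumT hcT hssT e.toLinearMap hxe
  -- trivial objects
  have htriv : ∀ i, D.IsTrivOneDim i → s i = 0 := by
    intro i hi
    exact jc_zero (hlf i) (hnil i) (hsum i) (hcomm i) (hss i) (hx.2.2.1 i hi)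
  -- multiplicativity of M
  have hM_mul : ∀ (mm m' : ↥D.M), (fun i => m'.1 i ∘ₗ mm.1 i) ∈ D.M := by
    intro mm m'
    refine ⟨⟨?_, ?_⟩, ?_, ?_⟩
    · intro i φ hφ
      have : (m'.1 i ∘ₗ mm.1 i).dualMap φ = (mm.1 i).dualMap ((m'.1 i).dualMap φ) := rfl
      rw [this]
      exact mm.2.1.1 i _ (m'.2.1.1 i φ hφ)
    · intro i j f hf
      have h1 : f ∘ₗ mm.1 i = mm.1 j ∘ₗ f := mm.2.1.2 i j f hf
      have h2 : f ∘ₗ m'.1 i = m'.1 j ∘ₗ f := m'.2.1.2 i j f hf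
      calc f ∘ₗ (m'.1 i ∘ₗ mm.1 i) = (f ∘ₗ m'.1 i) ∘ₗ mm.1 i := by rw [LinearMap.comp_assoc]
        _ = (m'.1 j ∘ₗ f) ∘ₗ mm.1 i := by rw [h2]
        _ = m'.1 j ∘ₗ (f ∘ₗ mm.1 i) := by rw [LinearMap.comp_assoc]
        _ = m'.1 j ∘ₗ (mm.1 j ∘ₗ f) := by rw [h1]
        _ = (m'.1 j ∘ₗ mm.1 j) ∘ₗ f := by rw [LinearMap.comp_assoc]
    · intro i j k e he
      have h1 := mm.2.2.1 i j k e he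
      have h2 := m'.2.2.1 i j k e he
      calc e.toLinearMap ∘ₗ (m'.1 k ∘ₗ mm.1 k)
          = (e.toLinearMap ∘ₗ m'.1 k) ∘ₗ mm.1 k := by rw [LinearMap.comp_assoc]
        _ = (TensorProduct.map (m'.1 i) (m'.1 j) ∘ₗ e.toLinearMap) ∘ₗ mm.1 k := by rw [h2]
        _ = TensorProduct.map (m'.1 i) (m'.1 j) ∘ₗ (e.toLinearMap ∘ₗ mm.1 k) := by
            rw [LinearMap.comp_assoc]
        _ = TensorProduct.map (m'.1 i) (m'.1 j) ∘ₗ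
              (TensorProduct.map (mm.1 i) (mm.1 j) ∘ₗ e.toLinearMap) := by rw [h1]
        _ = (TensorProduct.map (m'.1 i) (m'.1 j) ∘ₗ TensorProduct.map (mm.1 i) (mm.1 j)) ∘ₗ
              e.toLinearMap := by rw [LinearMap.comp_assoc]
        _ = TensorProduct.map (m'.1 i ∘ₗ mm.1 i) (m'.1 j ∘ₗ mm.1 j) ∘ₗ e.toLinearMap := by
            rw [TensorProduct.map_comp]
    · intro i hi
      show m'.1 i ∘ₗ mm.1 i = 1
      rw [mm.2.2.2 i hi, m'.2.2.2 i hi]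
      rfl
  -- the derivation of x
  obtain ⟨δx, hδx⟩ := hx.2.2.2
  -- key vanishing lemma
  have hker : ∀ (kk : D.ι) (ξ : Module.Dual F (D.V kk)) (u : D.V kk), ξ ∈ D.du kk →
      (∀ m : ↥D.M, ξ (m.1 kk u) = 0) → ξ (s kk u) = 0 := by
    intro kk ξ u hξ h0
    set Z : Submodule F (D.V kk) :=
      { carrier := {w | ∀ m : ↥D.M, ξ (m.1 kk w) = 0}
        add_mem' := fun ha hb m => by rw [map_add, map_add, ha m, hb m, add_zero]
        zero_mem' := fun m => by rw [map_zero, map_zero]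
        smul_mem' := fun c w hw m => by rw [map_smul, map_smul, hw m, smul_zero] } with hZ
    have hu : u ∈ Z := h0
    have hZx : ∀ w ∈ Z, x kk w ∈ Z := by
      intro w hw m'
      have hφ' : (m'.1 kk).dualMap ξ ∈ D.du kk := m'.2.1.1 kk ξ hξ
      have hzero : D.matCoef kk ((m'.1 kk).dualMap ξ) w
          = D.matCoef kk (0 : Module.Dual F (D.V kk)) w := by
        funext mm
        show ((m'.1 kk).dualMap ξ) (mm.1 kk w) = (0 : Module.Dual F (D.V kk)) (mm.1 kk w)
        have hcomposite := hw ⟨fun i => m'.1 i ∘ₗ mm.1 i, hM_mul mm m'⟩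
        simpa using hcomposite
      have h1 := hδx kk ((m'.1 kk).dualMap ξ) w hφ'
      have h2 := hδx kk (0 : Module.Dual F (D.V kk)) w (Submodule.zero_mem _)
      rw [hzero, h2] at h1
      have : ((m'.1 kk).dualMap ξ) (x kk w) = 0 := by
        rw [← h1]; simp
      simpa using this
    have hsu : s kk u ∈ Z := hpoly kk Z hZx u hu
    have := hsu D.oneM
    exact this
  -- well-definedness
  have hwd : ∀ (i : D.ι) (φ : Module.Dual F (D.V i)) (v : D.V i) (j : D.ι)
      (ψ : Module.Dual F (D.V j)) (w : D.V j), φ ∈ D.du i → ψ ∈ D.du j →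
      D.matCoef i φ v = D.matCoef j ψ w → φ (s i v) = ψ (s j w) := by
    intro i φ v j ψ w hφ hψ hfun
    obtain ⟨kk, e, he⟩ := HG.exists_sum i j
    set u : D.V kk := e.symm (v, w) with hu
    have heu : e u = (v, w) := e.apply_symm_apply _
    set π₁ : D.V kk →ₗ[F] D.V i := LinearMap.fst F (D.V i) (D.V j) ∘ₗ e.toLinearMap with hπ₁
    set π₂ : D.V kk →ₗ[F] D.V j := LinearMap.snd F (D.V i) (D.V j) ∘ₗ e.toLinearMap with hπ₂
    have hπ₁hom : D.IsHom π₁ := by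
      intro y
      refine LinearMap.ext fun z => ?_
      have := congrArg (fun P => P z) (he y)
      simp only [LinearMap.comp_apply, LinearEquiv.coe_toLinearMap] at this
      show (e ((D.ρ kk y) z)).1 = (D.ρ i y) ((e z).1)
      rw [this]
      rfl
    have hπ₂hom : D.IsHom π₂ := by
      intro y
      refine LinearMap.ext fun z => ?_
      have := congrArg (fun P => P z) (he y)
      simp only [LinearMap.comp_apply, LinearEquiv.coe_toLinearMap] at this
      show (e ((D.ρ kk y) z)).2 = (D.ρ j y) ((e z).2)
      rw [this]
      rfl
    set ξ : Module.Dual F (D.V kk) := e.toLinearMap.dualMap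
      ((LinearMap.fst F (D.V i) (D.V j)).dualMap φ +
        (LinearMap.snd F (D.V i) (D.V j)).dualMap (-ψ)) with hξdef
    have hξdu : ξ ∈ D.du kk :=
      (HG.du_sum i j kk e he ξ).mpr ⟨φ, hφ, -ψ, Submodule.neg_mem _ hψ, rfl⟩
    have hξapp : ∀ z : D.V kk, ξ z = φ ((e z).1) - ψ ((e z).2) := by
      intro z
      simp [hξdef, sub_eq_add_neg]
    have hξ0 : ∀ m : ↥D.M, ξ (m.1 kk u) = 0 := by
      intro m
      have h1 : π₁ ∘ₗ m.1 kk = m.1 i ∘ₗ π₁ := m.2.1.2 kk i π₁ hπ₁hom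
      have h2 : π₂ ∘ₗ m.1 kk = m.1 j ∘ₗ π₂ := m.2.1.2 kk j π₂ hπ₂hom
      have e1 : (e (m.1 kk u)).1 = m.1 i v := by
        have := congrArg (fun P => P u) h1
        simp only [LinearMap.comp_apply, hπ₁, LinearEquiv.coe_toLinearMap,
          LinearMap.fst_apply] at this
        rw [this, heu]
      have e2 : (e (m.1 kk u)).2 = m.1 j w := by
        have := congrArg (fun P => P u) h2
        simp only [LinearMap.comp_apply, hπ₂, LinearEquiv.coe_toLinearMap,
          LinearMap.snd_apply] at this
        rw [this, heu]
      rw [hξapp, e1, e2]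
      have := congrFun hfun m
      simp only [TannakaSetting.matCoef] at this
      rw [this, sub_self]
    have hfinal := hker kk ξ u hξdu hξ0
    have h1 : π₁ ∘ₗ s kk = s i ∘ₗ π₁ := hnat kk i π₁ hπ₁hom
    have h2 : π₂ ∘ₗ s kk = s j ∘ₗ π₂ := hnat kk j π₂ hπ₂hom
    have e1 : (e (s kk u)).1 = s i v := by
      have := congrArg (fun P => P u) h1
      simp only [LinearMap.comp_apply, hπ₁, LinearEquiv.coe_toLinearMap,
        LinearMap.fst_apply] at this
      rw [this, heu]
    have e2 : (e (s kk u)).2 = s j w := by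
      have := congrArg (fun P => P u) h2
      simp only [LinearMap.comp_apply, hπ₂, LinearEquiv.coe_toLinearMap,
        LinearMap.snd_apply] at this
      rw [this, heu]
    rw [hξapp, e1, e2] at hfinal
    exact sub_eq_zero.mp hfinal
  -- the derivation for s
  have hδs : ∃ δ : (↥D.M → F) → F, ∀ (i : D.ι) (φ : Module.Dual F (D.V i)) (v : D.V i),
      φ ∈ D.du i → δ (D.matCoef i φ v) = φ (s i v) := by
    refine ⟨fun fn => if h : ∃ p : Σ i : D.ι, Module.Dual F (D.V i) × D.V i,
        p.2.1 ∈ D.du p.1 ∧ fn = D.matCoef p.1 p.2.1 p.2.2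
      then h.choose.2.1 (s h.choose.1 h.choose.2.2) else 0, ?_⟩
    intro i φ v hφ
    have hex : ∃ p : Σ i : D.ι, Module.Dual F (D.V i) × D.V i,
        p.2.1 ∈ D.du p.1 ∧ D.matCoef i φ v = D.matCoef p.1 p.2.1 p.2.2 := ⟨⟨i, φ, v⟩, hφ, rfl⟩
    beta_reduce
    rw [dif_pos hex]
    obtain ⟨hdu', heq⟩ := hex.choose_spec
    exact hwd _ _ _ i φ v hdu' hφ heq.symm
  obtain ⟨δs, hδsp⟩ := hδs
  -- s ∈ LieM
  have hsLie : s ∈ D.LieM := ⟨⟨hsdu, hnat⟩, htens, htriv, ⟨δs, hδsp⟩⟩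
  -- n ∈ LieM
  have hnLie : n ∈ D.LieM := by
    refine ⟨⟨hndu, ?_⟩, ?_, ?_, ?_⟩
    · intro i j f hf
      rw [hn_eq i, hn_eq j, LinearMap.comp_sub, LinearMap.sub_comp, hx.1.2 i j f hf,
        hnat i j f hf]
    · intro i j k e he
      have hxe := hx.2.1 i j k e he
      have hse := htens i j k e he
      rw [hn_eq k, hn_eq i, hn_eq j, LinearMap.comp_sub, hxe, hse]
      have hmapi : TensorProduct.map (x i - s i) (LinearMap.id : Module.End F (D.V j))
          = TensorProduct.map (x i) LinearMap.id - TensorProduct.map (s i) LinearMap.id := by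
        have := TensorProduct.map_add_left (x i - s i) (s i)
          (LinearMap.id : Module.End F (D.V j))
        rw [sub_add_cancel] at this
        rw [this]; abel
      have hmapj : TensorProduct.map (LinearMap.id : Module.End F (D.V i)) (x j - s j)
          = TensorProduct.map LinearMap.id (x j) - TensorProduct.map LinearMap.id (s j) := by
        have := TensorProduct.map_add_right (LinearMap.id : Module.End F (D.V i))
          (x j - s j) (s j)
        rw [sub_add_cancel] at this
        rw [this]; abel
      rw [hmapi, hmapj, ← LinearMap.sub_comp]
      congr 1
      abel
    · intro i hi
      rw [hn_eq i, hx.2.2.1 i hi, htriv i hi, sub_zero]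
    · refine ⟨fun fn => δx fn - δs fn, ?_⟩
      intro i φ v hφ
      show δx (D.matCoef i φ v) - δs (D.matCoef i φ v) = φ ((n i) v)
      rw [hδx i φ v hφ, hδsp i φ v hφ, hn_eq i]
      simp
  refine ⟨hsLie, hnLie, funext hsum, funext hcomm, ?_⟩
  intro s' n' _ _ hss' hnil' hsum' hcomm'
  have hseq : ∀ i, s' i = s i := by
    intro i
    have h1 : x i = s' i + n' i := congrFun hsum' i
    have h2 : Commute (s' i) (n' i) := congrFun hcomm' i
    exact (jc_unique (hlf i) (hnil i) (hsum i) (hcomm i) (hss i)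
      (hnil' i) h1 h2 (hss' i)).symm
  refine ⟨funext hseq, funext fun i => ?_⟩
  have h1 : x i = s' i + n' i := congrFun hsum' i
  have : n' i = x i - s' i := by rw [h1]; abel
  rw [this, hseq i, hn_eq i]
end

section
/- Let A be a saturated submonoid of a free Z-module of finite rank and let F be a field of characteristic zero. For a face F' of A, let T(F') := {α ∈ Ã : α^{-1}(F^×) = F'} and let e(F') ∈ Ã be given by e(F')(λ) = 1 for λ ∈ F' and e(F')(λ) = 0 for λ ∈ A∖F'. Then: (1) T(A) is the unit group of the monoid Ã, the set of idempotents of Ã is exactly E := {e(F') : F' a face of A}, and Ã = T(A)·E = E·T(A). (2) For every face F', T(F') is a subgroup of Ã with unit e(F'), isomorphic to the torus Hom((F'−F',+),(F^×,·)) via the map Φ_{F'} sending α to the element of Ã equal to α on F' and 0 on A∖F'; the sets T(F'), F' a face of A, are exactly the orbits of the left-multiplication action of T(A) on Ã. (3) The Zariski closure of T(F') in Ã equals the union of T(G) over all faces G of the monoid F'; for every λ in the relative interior of a face F' (i.e. F' is the smallest face of A containing λ), the principal open set D(λ) := {α ∈ Ã : α(λ) ≠ 0} equals the union of T(G) over all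 faces G of A with G ⊇ F'; in particular T(A) is a principal open dense subset of Ã. -/
open scoped Classical

universe u v

section GeneralizedToricMonoid

variable (F : Type u) [Field F] {L : Type v} [AddCommGroup L]

/-- `α : A → F` is a character of the abelian monoid `(A, +)` with values in the
multiplicative monoid `(F, ·)`; the set of all of these is the monoid `Ã`. -/
def IsChar (A : AddSubmonoid L) (α : ↥A → F) : Prop :=
  α 0 = 1 ∧ ∀ a b : ↥A, α (a + b) = α a * α b

/-- `G` is a face of the submonoid `B`:  `G` is a submonoid of `B` with
`(B ∖ G) + B ⊆ B ∖ G`. -/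
def IsFaceOf (B G : AddSubmonoid L) : Prop :=
  G ≤ B ∧ ∀ a ∈ B, ∀ b ∈ B, a + b ∈ G → a ∈ G

/-- The subset `T(G) = {α ∈ Ã : α⁻¹(F^×) = G}` of `Ã`. -/
def TSet (A G : AddSubmonoid L) : Set (↥A → F) :=
  { α | IsChar F A α ∧ ∀ a : ↥A, (α a ≠ 0 ↔ (a : L) ∈ G) }

/-- The idempotent `e(G) ∈ Ã`, equal to `1` on `G` and `0` off `G`. -/
noncomputable def eChar (A G : AddSubmonoid L) : ↥A → F :=
  fun a => if (a : L) ∈ G then 1 else 0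

/-- The Zariski closure of a set of characters, with respect to the coordinate ring on `Ã`
given by the monoid algebra `F[A]` (spanned by the evaluation functions `α ↦ α(λ)`). -/
def ZClos (A : AddSubmonoid L) (S : Set (↥A → F)) : Set (↥A → F) :=
  { α | IsChar F A α ∧ ∀ (n : ℕ) (c : Fin n → F) (lam : Fin n → ↥A),
      (∀ β ∈ S, ∑ k, c k * β (lam k) = 0) → ∑ k, c k * α (lam k) = 0 }

/-- A character of the group generated by `G` with values in `F^×`; the group of all of these
is the torus `Hom(G − G, F^×)`. -/
def IsGrpChar (G : AddSubmonoid L) (γ : ↥(AddSubgroup.closure (G : Set L)) → F) : Prop :=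
  γ 0 = 1 ∧ (∀ a b, γ (a + b) = γ a * γ b) ∧ ∀ a, γ a ≠ 0

/-- The map `Φ_G` from the torus `Hom(G − G, F^×)` to `Ã`, sending `γ` to the character equal
to `γ` on `G` and `0` off `G`. -/
noncomputable def PhiFun (A G : AddSubmonoid L)
    (γ : ↥(AddSubgroup.closure (G : Set L)) → F) : ↥A → F :=
  fun a => if h : (a : L) ∈ G then γ ⟨(a : L), AddSubgroup.subset_closure h⟩ else 0

end GeneralizedToricMonoid

section Helpers

variable {F : Type u} [Field F] {L : Type v} [AddCommGroup L] {A G G' : AddSubmonoid L}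

lemma face_trans (h1 : IsFaceOf A G) (h2 : IsFaceOf G G') : IsFaceOf A G' := by
  refine ⟨h2.1.trans h1.1, fun a ha b hb hab => ?_⟩
  have hsum : a + b ∈ G := h2.1 hab
  have haG : a ∈ G := h1.2 a ha b hb hsum
  have hbG : b ∈ G := h1.2 b hb a ha (by rwa [add_comm] at hsum)
  exact h2.2 a haG b hbG hab

lemma face_self (A : AddSubmonoid L) : IsFaceOf A A := ⟨le_refl _, fun a ha _ _ _ => ha⟩

lemma face_nsmul_mem (hG : IsFaceOf A G) {a : L} (ha : a ∈ A) {n : ℕ} (hn : n ≠ 0)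
    (h : n • a ∈ G) : a ∈ G := by
  obtain ⟨m, rfl⟩ := Nat.exists_eq_succ_of_ne_zero hn
  rw [succ_nsmul] at h
  exact hG.2 a ha (m • a) (AddSubmonoid.nsmul_mem A ha m) (by rwa [add_comm] at h)

lemma face_add_mem_iff (hG : IsFaceOf A G) {a b : L} (ha : a ∈ A) (hb : b ∈ A) :
    a + b ∈ G ↔ a ∈ G ∧ b ∈ G := by
  constructor
  · intro h
    exact ⟨hG.2 a ha b hb h, hG.2 b hb a ha (by rwa [add_comm])⟩
  · rintro ⟨h1, h2⟩; exact G.add_mem h1 h2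

lemma exists_sub_of_mem_closure {x : L} (hx : x ∈ AddSubgroup.closure (G : Set L)) :
    ∃ a ∈ G, ∃ b ∈ G, x = a - b := by
  let H : AddSubgroup L :=
    { carrier := {x | ∃ a ∈ G, ∃ b ∈ G, x = a - b}
      zero_mem' := ⟨0, G.zero_mem, 0, G.zero_mem, by simp⟩
      add_mem' := by
        rintro p q ⟨a, ha, b, hb, rfl⟩ ⟨c, hc, d, hd, rfl⟩
        exact ⟨a + c, G.add_mem ha hc, b + d, G.add_mem hb hd, by abel⟩
      neg_mem' := by
        rintro p ⟨a, ha, b, hb, rfl⟩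
        exact ⟨b, hb, a, ha, by abel⟩ }
  have hle : AddSubgroup.closure (G : Set L) ≤ H :=
    (AddSubgroup.closure_le H).mpr (fun g hg => ⟨g, hg, 0, G.zero_mem, by simp⟩)
  exact hle hx

lemma mem_face_of_mem_closure (hG : IsFaceOf A G) {a : L} (ha : a ∈ A)
    (h : a ∈ AddSubgroup.closure (G : Set L)) : a ∈ G := by
  obtain ⟨g1, hg1, g2, hg2, he⟩ := exists_sub_of_mem_closure h
  have : a + g2 ∈ G := by rw [he]; simpa using hg1
  exact hG.2 a ha g2 (hG.1 hg2) this

/-- The support of a character, as a submonoid. -/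
def suppM (A : AddSubmonoid L) (α : ↥A → F) (hα : IsChar F A α) : AddSubmonoid L where
  carrier := {x | ∃ h : x ∈ A, α ⟨x, h⟩ ≠ 0}
  zero_mem' := ⟨A.zero_mem, by
    have : (⟨(0 : L), A.zero_mem⟩ : ↥A) = 0 := rfl
    rw [this, hα.1]; exact one_ne_zero⟩
  add_mem' := by
    rintro x y ⟨hx, hx0⟩ ⟨hy, hy0⟩
    refine ⟨A.add_mem hx hy, ?_⟩
    have : (⟨x + y, A.add_mem hx hy⟩ : ↥A) = ⟨x, hx⟩ + ⟨y, hy⟩ := rfl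
    rw [this, hα.2]
    exact mul_ne_zero hx0 hy0

lemma suppM_isFace {α : ↥A → F} (hα : IsChar F A α) : IsFaceOf A (suppM A α hα) := by
  refine ⟨fun x hx => hx.1, fun a ha b hb hab => ?_⟩
  obtain ⟨hmem, hne⟩ := hab
  refine ⟨ha, fun h0 => hne ?_⟩
  have : (⟨a + b, hmem⟩ : ↥A) = ⟨a, ha⟩ + ⟨b, hb⟩ := rfl
  rw [this, hα.2, h0, zero_mul]

lemma mem_suppM_iff {α : ↥A → F} (hα : IsChar F A α) (a : ↥A) :
    (a : L) ∈ suppM A α hα ↔ α a ≠ 0 := by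
  constructor
  · rintro ⟨h, hne⟩; rwa [Subtype.coe_eta] at hne
  · intro h; exact ⟨a.2, by rwa [Subtype.coe_eta]⟩

lemma mem_TSet_suppM {α : ↥A → F} (hα : IsChar F A α) : α ∈ TSet F A (suppM A α hα) :=
  ⟨hα, fun a => (mem_suppM_iff hα a).symm⟩

end Helpers

section Ext

variable {F : Type u} [Field F] {L : Type v} [AddCommGroup L] {A G G' : AddSubmonoid L}

lemma face_closure_pure (hsat : ∀ (x : L) (n : ℕ), n ≠ 0 → n • x ∈ A → x ∈ A)
    (hG : IsFaceOf A G) :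
    ∀ (x : L) (n : ℕ), n ≠ 0 → n • x ∈ AddSubgroup.closure (G : Set L) →
      x ∈ AddSubgroup.closure (G : Set L) := by
  intro x n hn hx
  obtain ⟨g1, hg1, g2, hg2, he⟩ := exists_sub_of_mem_closure hx
  obtain ⟨m, rfl⟩ := Nat.exists_eq_succ_of_ne_zero hn
  have key : (m + 1) • (x + g2) = g1 + m • g2 := by
    rw [smul_add]
    rw [he]
    rw [succ_nsmul g2 m]
    abel
  have hmemA : (m + 1) • (x + g2) ∈ A := by
    rw [key]
    exact A.add_mem (hG.1 hg1) (AddSubmonoid.nsmul_mem A (hG.1 hg2) m)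
  have hxg2A : x + g2 ∈ A := hsat _ (m + 1) (Nat.succ_ne_zero m) hmemA
  have hmemG : (m + 1) • (x + g2) ∈ G := by
    rw [key]
    exact G.add_mem hg1 (AddSubmonoid.nsmul_mem G hg2 m)
  have hxg2G : x + g2 ∈ G := face_nsmul_mem hG hxg2A (Nat.succ_ne_zero m) hmemG
  have : x = (x + g2) - g2 := by abel
  rw [this]
  exact sub_mem (AddSubgroup.subset_closure hxg2G) (AddSubgroup.subset_closure hg2)

/-- Extension of a multiplicative character on a pure subgroup to the whole free module. -/
lemma exists_extension_of_pure [Module.Free ℤ L] [Module.Finite ℤ L] {H : AddSubgroup L}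
    (hpure : ∀ (x : L) (n : ℕ), n ≠ 0 → n • x ∈ H → x ∈ H)
    (δ : ↥H → F) (hδ1 : δ 0 = 1) (hδm : ∀ a b, δ (a + b) = δ a * δ b) (hδ0 : ∀ a, δ a ≠ 0) :
    ∃ t : L → F, t 0 = 1 ∧ (∀ x y, t (x + y) = t x * t y) ∧ (∀ x, t x ≠ 0) ∧
      ∀ (x : L) (hx : x ∈ H), t x = δ ⟨x, hx⟩ := by
  set H' : Submodule ℤ L := AddSubgroup.toIntSubmodule H with hH'
  have hmemH' : ∀ x : L, x ∈ H' ↔ x ∈ H := fun x => Iff.rfl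
  haveI : NoZeroSMulDivisors ℤ (L ⧸ H') := by
    refine ⟨fun {n x} h => ?_⟩
    by_cases hn : n = 0
    · exact Or.inl hn
    refine Or.inr ?_
    obtain ⟨x', rfl⟩ := Submodule.mkQ_surjective H' x
    have hx' : n • x' ∈ H' := by
      have h2 : H'.mkQ (n • x') = 0 := by rw [map_smul, h]
      rwa [Submodule.mkQ_apply, Submodule.Quotient.mk_eq_zero] at h2
    have hnat : n.natAbs • x' ∈ H := by
      rcases Int.natAbs_eq n with he | he
      · have h2 : (n.natAbs : ℤ) • x' ∈ H' := by rw [← he]; exact hx'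
        rwa [natCast_zsmul] at h2
      · have h2 : (n.natAbs : ℤ) • x' ∈ H' := by
          have h3 : (n.natAbs : ℤ) • x' = -(n • x') := by rw [he]; simp
          rw [h3]; exact neg_mem hx'
        rwa [natCast_zsmul] at h2
    have hxH : x' ∈ H := hpure x' n.natAbs (Int.natAbs_ne_zero.mpr hn) hnat
    rw [Submodule.mkQ_apply, Submodule.Quotient.mk_eq_zero]
    exact hxH
  haveI : Module.Free ℤ (L ⧸ H') := Module.free_of_finite_type_torsion_free'
  obtain ⟨s, hs⟩ := Module.projective_lifting_property H'.mkQ LinearMap.id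
    (Submodule.mkQ_surjective H')
  have hs' : ∀ q, H'.mkQ (s q) = q := fun q => by
    have := LinearMap.congr_fun hs q
    simpa using this
  have hr : ∀ x : L, x - s (H'.mkQ x) ∈ H := by
    intro x
    have h0 : H'.mkQ (x - s (H'.mkQ x)) = 0 := by rw [map_sub, hs']; simp
    rwa [Submodule.mkQ_apply, Submodule.Quotient.mk_eq_zero] at h0
  refine ⟨fun x => δ ⟨x - s (H'.mkQ x), hr x⟩, ?_, ?_, ?_, ?_⟩
  · show δ ⟨(0 : L) - s (H'.mkQ 0), hr 0⟩ = 1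
    have h1 : (⟨(0 : L) - s (H'.mkQ 0), hr 0⟩ : ↥H) = 0 := by
      apply Subtype.ext; simp
    rw [h1, hδ1]
  · intro x y
    show δ ⟨(x + y) - s (H'.mkQ (x + y)), hr (x + y)⟩
      = δ ⟨x - s (H'.mkQ x), hr x⟩ * δ ⟨y - s (H'.mkQ y), hr y⟩
    rw [← hδm]
    apply congrArg δ
    apply Subtype.ext
    show (x + y) - s (H'.mkQ (x + y)) = (x - s (H'.mkQ x)) + (y - s (H'.mkQ y))
    rw [map_add, map_add]
    abel
  · intro x; exact hδ0 _
  · intro x hx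
    show δ ⟨x - s (H'.mkQ x), hr x⟩ = δ ⟨x, hx⟩
    apply congrArg δ
    apply Subtype.ext
    have hx0 : H'.mkQ x = 0 := by
      rw [Submodule.mkQ_apply, Submodule.Quotient.mk_eq_zero]; exact hx
    show x - s (H'.mkQ x) = x
    rw [hx0]; simp

end Ext

section GrpChar

variable {F : Type u} [Field F] {L : Type v} [AddCommGroup L] {A G G' : AddSubmonoid L}

lemma phi_mem_TSet (hG : IsFaceOf A G) {γ : ↥(AddSubgroup.closure (G : Set L)) → F}
    (hγ : IsGrpChar F G γ) : PhiFun F A G γ ∈ TSet F A G := by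
  refine ⟨⟨?_, ?_⟩, ?_⟩
  · show (if h : ((0 : ↥A) : L) ∈ G then _ else (0 : F)) = 1
    rw [dif_pos (show ((0 : ↥A) : L) ∈ G from G.zero_mem)]
    have : (⟨((0 : ↥A) : L), AddSubgroup.subset_closure G.zero_mem⟩ :
        ↥(AddSubgroup.closure (G : Set L))) = 0 := by apply Subtype.ext; rfl
    rw [this, hγ.1]
  · intro a b
    show (if h : ((a + b : ↥A) : L) ∈ G then _ else (0 : F)) = _
    by_cases ha : (a : L) ∈ G
    · by_cases hb : (b : L) ∈ G
      · have hab : ((a + b : ↥A) : L) ∈ G := G.add_mem ha hb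
        rw [dif_pos hab]
        show γ _ = PhiFun F A G γ a * PhiFun F A G γ b
        unfold PhiFun
        rw [dif_pos ha, dif_pos hb, ← hγ.2.1]
        apply congrArg γ
        apply Subtype.ext
        rfl
      · have hab : ¬ ((a + b : ↥A) : L) ∈ G := by
          intro h
          exact hb ((face_add_mem_iff hG a.2 b.2).mp h).2
        unfold PhiFun
        rw [dif_neg hab, dif_neg hb, mul_zero]
    · have hab : ¬ ((a + b : ↥A) : L) ∈ G := by
        intro h
        exact ha ((face_add_mem_iff hG a.2 b.2).mp h).1
      unfold PhiFun
      rw [dif_neg hab, dif_neg ha, zero_mul]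
  · intro a
    unfold PhiFun
    by_cases ha : (a : L) ∈ G
    · rw [dif_pos ha]
      exact iff_of_true (hγ.2.2 _) ha
    · rw [dif_neg ha]
      simp [ha]

lemma grpChar_eq_ratio {γ : ↥(AddSubgroup.closure (G : Set L)) → F} (hγ : IsGrpChar F G γ)
    (z : ↥(AddSubgroup.closure (G : Set L))) {a b : L} (ha : a ∈ G) (hb : b ∈ G)
    (he : (z : L) = a - b) :
    γ z = γ ⟨a, AddSubgroup.subset_closure ha⟩ * (γ ⟨b, AddSubgroup.subset_closure hb⟩)⁻¹ := by
  have key : γ z * γ ⟨b, AddSubgroup.subset_closure hb⟩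
      = γ ⟨a, AddSubgroup.subset_closure ha⟩ := by
    rw [← hγ.2.1]
    apply congrArg γ
    apply Subtype.ext
    show (z : L) + b = a
    rw [he]; abel
  field_simp [hγ.2.2]
  exact key

/-- From `α ∈ T(G)` produce a group character with `Φ γ = α`. -/
lemma exists_grpChar (hG : IsFaceOf A G) {α : ↥A → F} (hα : α ∈ TSet F A G) :
    ∃ γ : ↥(AddSubgroup.closure (G : Set L)) → F, IsGrpChar F G γ ∧ PhiFun F A G γ = α := by
  have hne : ∀ {x : L} (hx : x ∈ G), α ⟨x, hG.1 hx⟩ ≠ 0 := by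
    intro x hx
    exact (hα.2 ⟨x, hG.1 hx⟩).mpr hx
  -- well-definedness of the ratio
  have hwd : ∀ {a b a' b' : L} (ha : a ∈ G) (hb : b ∈ G) (ha' : a' ∈ G) (hb' : b' ∈ G),
      a - b = a' - b' →
      α ⟨a, hG.1 ha⟩ * (α ⟨b, hG.1 hb⟩)⁻¹ = α ⟨a', hG.1 ha'⟩ * (α ⟨b', hG.1 hb'⟩)⁻¹ := by
    intro a b a' b' ha hb ha' hb' he
    have hsum : a + b' = a' + b := by
      have := sub_eq_sub_iff_add_eq_add.mp he
      linear_combination (norm := abel) this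
    have h1 : α ⟨a, hG.1 ha⟩ * α ⟨b', hG.1 hb'⟩ = α ⟨a', hG.1 ha'⟩ * α ⟨b, hG.1 hb⟩ := by
      rw [← hα.1.2, ← hα.1.2]
      apply congrArg α
      apply Subtype.ext
      exact hsum
    field_simp [hne hb, hne hb']
    linear_combination h1
  choose ga hga gb hgb hgab using
    fun z : ↥(AddSubgroup.closure (G : Set L)) => exists_sub_of_mem_closure z.2
  set γ : ↥(AddSubgroup.closure (G : Set L)) → F :=
    fun z => α ⟨ga z, hG.1 (hga z)⟩ * (α ⟨gb z, hG.1 (hgb z)⟩)⁻¹ with hγdef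
  have hval : ∀ (z : ↥(AddSubgroup.closure (G : Set L))) {a b : L} (ha : a ∈ G) (hb : b ∈ G),
      (z : L) = a - b → γ z = α ⟨a, hG.1 ha⟩ * (α ⟨b, hG.1 hb⟩)⁻¹ := by
    intro z a b ha hb he
    exact hwd (hga z) (hgb z) ha hb (by rw [← hgab z, he])
  have h0G : (0 : L) ∈ G := G.zero_mem
  have hzeroA : (⟨(0 : L), hG.1 h0G⟩ : ↥A) = 0 := by apply Subtype.ext; rfl
  refine ⟨γ, ⟨?_, ?_, ?_⟩, ?_⟩
  · rw [hval 0 h0G h0G (by simp), hzeroA, hα.1.1]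
    simp
  · intro z w
    rw [hval z (hga z) (hgb z) (hgab z), hval w (hga w) (hgb w) (hgab w),
      hval (z + w) (G.add_mem (hga z) (hga w)) (G.add_mem (hgb z) (hgb w))
        (by push_cast [hgab z, hgab w]; abel)]
    have hm1 : α ⟨ga z + ga w, hG.1 (G.add_mem (hga z) (hga w))⟩
        = α ⟨ga z, hG.1 (hga z)⟩ * α ⟨ga w, hG.1 (hga w)⟩ := by
      rw [← hα.1.2]; apply congrArg α; apply Subtype.ext; rfl
    have hm2 : α ⟨gb z + gb w, hG.1 (G.add_mem (hgb z) (hgb w))⟩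
        = α ⟨gb z, hG.1 (hgb z)⟩ * α ⟨gb w, hG.1 (hgb w)⟩ := by
      rw [← hα.1.2]; apply congrArg α; apply Subtype.ext; rfl
    rw [hm1, hm2]
    field_simp [hne (hgb z), hne (hgb w)]
  · intro z
    exact mul_ne_zero (hne (hga z)) (inv_ne_zero (hne (hgb z)))
  · funext a
    unfold PhiFun
    by_cases ha : (a : L) ∈ G
    · rw [dif_pos ha]
      rw [hval _ ha h0G (by simp)]
      have : (⟨(a : L), hG.1 ha⟩ : ↥A) = a := Subtype.coe_eta a _
      rw [this, hzeroA, hα.1.1]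
      simp
    · rw [dif_neg ha]
      by_contra h
      exact ha ((hα.2 a).mp (fun h0 => h h0.symm))

/-- Combined: `α ∈ T(G')`, `G'` a face of saturated `A`: extend `α|G'` to a nowhere-zero
character of all of `L`. -/
lemma exists_unitChar_extending [Module.Free ℤ L] [Module.Finite ℤ L]
    (hsat : ∀ (x : L) (n : ℕ), n ≠ 0 → n • x ∈ A → x ∈ A)
    (hG' : IsFaceOf A G') {α : ↥A → F} (hα : α ∈ TSet F A G') :
    ∃ t : L → F, t 0 = 1 ∧ (∀ x y, t (x + y) = t x * t y) ∧ (∀ x, t x ≠ 0) ∧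
      ∀ a : ↥A, (a : L) ∈ G' → t a = α a := by
  obtain ⟨γ, hγ, hphi⟩ := exists_grpChar hG' hα
  obtain ⟨t, ht1, htm, htn, hte⟩ := exists_extension_of_pure (H := AddSubgroup.closure (G' : Set L))
    (face_closure_pure hsat hG') γ hγ.1 hγ.2.1 hγ.2.2
  refine ⟨t, ht1, htm, htn, ?_⟩
  intro a ha
  rw [hte (a : L) (AddSubgroup.subset_closure ha)]
  have := congrFun hphi a
  unfold PhiFun at this
  rw [dif_pos ha] at this
  exact this

end GrpChar

section Dedekind

variable {F : Type u} [Field F] {L : Type v} [AddCommGroup L]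

lemma exists_sep_single [Module.Free ℤ L] [Module.Finite ℤ L] {v : L} (hv : v ≠ 0) :
    ∃ ψ : L →ₗ[ℤ] ℤ, ψ v ≠ 0 := by
  let b := Module.Free.chooseBasis ℤ L
  have : b.repr v ≠ 0 := fun h => hv (by
    have := congrArg b.repr.symm h
    simpa using this)
  obtain ⟨i, hi⟩ := Finsupp.ne_iff.mp this
  exact ⟨b.coord i, by simpa [Module.Basis.coord_apply] using hi⟩

lemma exists_sep [Module.Free ℤ L] [Module.Finite ℤ L] (s : Finset L) :
    ∃ ψ : L →ₗ[ℤ] ℤ, ∀ v ∈ s, v ≠ 0 → ψ v ≠ 0 := by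
  classical
  induction s using Finset.induction_on with
  | empty => exact ⟨0, by simp⟩
  | @insert v s hvs ih =>
    obtain ⟨ψ, hψ⟩ := ih
    by_cases hv : v = 0
    · refine ⟨ψ, fun w hw hw0 => ?_⟩
      rcases Finset.mem_insert.mp hw with rfl | hws
      · exact absurd hv hw0
      · exact hψ w hws hw0
    obtain ⟨ψ₀, hψ₀⟩ := exists_sep_single hv
    set bad : L → ℤ := fun w => -(ψ w / ψ₀ w) with hbad
    obtain ⟨n, hn⟩ := Infinite.exists_notMem_finset ((insert v s).image bad)
    refine ⟨ψ + n • ψ₀, fun w hw hw0 => ?_⟩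
    by_cases h0 : ψ₀ w = 0
    · have hws : w ∈ s := by
        rcases Finset.mem_insert.mp hw with rfl | h
        · exact absurd h0 hψ₀
        · exact h
      simpa [LinearMap.add_apply, LinearMap.smul_apply, smul_eq_mul, h0] using hψ w hws hw0
    · intro hcon
      have h1 : ψ w + n * ψ₀ w = 0 := by
        simpa [LinearMap.add_apply, LinearMap.smul_apply, smul_eq_mul] using hcon
      have h2 : ψ w = ψ₀ w * (-n) := by linarith
      have h3 : ψ w / ψ₀ w = -n := by rw [h2]; exact Int.mul_ediv_cancel_left _ h0
      have hb : bad w = n := by simp [hbad, h3]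
      exact hn (Finset.mem_image.mpr ⟨w, hw, hb⟩)

lemma two_zpow_injective [CharZero F] : Function.Injective (fun m : ℤ => (2 : F) ^ m) := by
  intro m k h
  have cast2 : ((2 : ℚ) : F) = (2 : F) := by norm_cast
  have h3 : (((2 : ℚ) ^ m : ℚ) : F) = (((2 : ℚ) ^ k : ℚ) : F) := by
    push_cast
    simpa using h
  have h4 : (2 : ℚ) ^ m = (2 : ℚ) ^ k := Rat.cast_injective h3
  exact zpow_right_injective₀ (by norm_num) (by norm_num) h4

lemma vandermonde_zero {m : ℕ} (e : Fin m → F) (he : Function.Injective e) (d : Fin m → F)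
    (h : ∀ j : ℕ, ∑ i, d i * e i ^ j = 0) : ∀ i, d i = 0 := by
  have hdet : (Matrix.vandermonde e).det ≠ 0 := Matrix.det_vandermonde_ne_zero_iff.mpr he
  have hv : Matrix.vecMul d (Matrix.vandermonde e) = 0 := by
    funext j
    have := h (j : ℕ)
    simpa [Matrix.vecMul, Matrix.vandermonde, dotProduct] using this
  have hd : d = 0 := by
    have h1 := congrArg (fun v => Matrix.vecMul v (Matrix.vandermonde e)⁻¹) hv
    simpa [Matrix.vecMul_vecMul,
      Matrix.mul_nonsing_inv _ (isUnit_iff_ne_zero.mpr hdet), Matrix.zero_vecMul] using h1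
  intro i
  rw [hd]
  rfl

/-- Dedekind-type independence: if a linear combination of evaluations at points `μ k`
vanishes for all nowhere-zero characters of `L`, then it vanishes when the character is
replaced by an arbitrary function. -/
lemma dedekind [CharZero F] [Module.Free ℤ L] [Module.Finite ℤ L] {n : ℕ}
    (d : Fin n → F) (μ : Fin n → L)
    (h : ∀ χ : L → F, χ 0 = 1 → (∀ x y, χ (x + y) = χ x * χ y) → (∀ x, χ x ≠ 0) →
      ∑ k, d k * χ (μ k) = 0)
    (g : L → F) : ∑ k, d k * g (μ k) = 0 := by
  classical
  set s : Finset L := Finset.image μ Finset.univ with hs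
  set D : L → F := fun x => ∑ k ∈ Finset.univ.filter (fun k => μ k = x), d k with hD
  obtain ⟨ψ, hψ⟩ := exists_sep ((s ×ˢ s).image (fun p => p.1 - p.2))
  have hinj : ∀ x ∈ s, ∀ y ∈ s, ψ x = ψ y → x = y := by
    intro x hx y hy hxy
    by_contra hne
    have hmem : x - y ∈ (s ×ˢ s).image (fun p => p.1 - p.2) :=
      Finset.mem_image.mpr ⟨(x, y), Finset.mem_product.mpr ⟨hx, hy⟩, rfl⟩
    exact hψ _ hmem (sub_ne_zero.mpr hne) (by rw [map_sub, hxy, sub_self])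
  set E : L → F := fun x => (2 : F) ^ (ψ x) with hE
  have hEinj : ∀ x ∈ s, ∀ y ∈ s, E x = E y → x = y := by
    intro x hx y hy hxy
    exact hinj x hx y hy (two_zpow_injective hxy)
  have htwo : (2 : F) ≠ 0 := two_ne_zero
  -- power sums vanish
  have hpow : ∀ j : ℕ, ∑ x ∈ s, D x * E x ^ j = 0 := by
    intro j
    have hχ := h (fun x => (E x) ^ j) ?_ ?_ ?_
    · rw [← hχ]
      rw [← Finset.sum_fiberwise_of_maps_to (g := μ) (t := s)
        (fun k _ => Finset.mem_image.mpr ⟨k, Finset.mem_univ k, rfl⟩)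
        (fun k => d k * E (μ k) ^ j)]
      apply Finset.sum_congr rfl
      intro x hx
      rw [Finset.sum_mul]
      apply Finset.sum_congr rfl
      intro k hk
      rw [(Finset.mem_filter.mp hk).2]
    · simp [hE]
    · intro x y
      simp only [hE, map_add]
      rw [zpow_add₀ htwo, mul_pow]
    · intro x
      exact pow_ne_zero _ (zpow_ne_zero _ htwo)
  -- Vandermonde over distinct values
  have hDzero : ∀ x, D x = 0 := by
    have hcard := s.equivFin
    set e : Fin s.card → F := fun i => E ((hcard.symm i) : L) with he
    have heinj : Function.Injective e := by
      intro i j hij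
      have := hEinj _ (hcard.symm i).2 _ (hcard.symm j).2 hij
      have h2 : (hcard.symm i) = (hcard.symm j) := Subtype.ext this
      simpa using congrArg hcard h2
    have hvan : ∀ j : ℕ, ∑ i, (fun i => D ((hcard.symm i) : L)) i * e i ^ j = 0 := by
      intro j
      have h1 : ∑ i, D ((hcard.symm i) : L) * E ((hcard.symm i) : L) ^ j
          = ∑ x ∈ s.attach, D (x : L) * E (x : L) ^ j :=
        Equiv.sum_comp hcard.symm (fun x => D (x : L) * E (x : L) ^ j)
      rw [he]
      rw [h1, Finset.sum_attach s (fun x => D x * E x ^ j)]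
      exact hpow j
    have := vandermonde_zero e heinj _ hvan
    intro x
    by_cases hx : x ∈ s
    · have := this (hcard ⟨x, hx⟩)
      simpa using this
    · rw [hD]
      apply Finset.sum_eq_zero
      intro k hk
      exact absurd (Finset.mem_image.mpr ⟨k, Finset.mem_univ k, (Finset.mem_filter.mp hk).2⟩) hx
  -- conclude for arbitrary g
  rw [← Finset.sum_fiberwise_of_maps_to (g := μ) (t := s)
    (fun k _ => Finset.mem_image.mpr ⟨k, Finset.mem_univ k, rfl⟩)
    (fun k => d k * g (μ k))]
  apply Finset.sum_eq_zero
  intro x hx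
  have : ∑ k ∈ Finset.univ.filter (fun k => μ k = x), d k * g (μ k)
      = (∑ k ∈ Finset.univ.filter (fun k => μ k = x), d k) * g x := by
    rw [Finset.sum_mul]
    apply Finset.sum_congr rfl
    intro k hk
    rw [(Finset.mem_filter.mp hk).2]
  rw [this]
  have h0 := hDzero x
  simp only [hD] at h0
  rw [h0, zero_mul]

end Dedekind

section Key

variable {F : Type u} [Field F] {L : Type v} [AddCommGroup L] {A G G' : AddSubmonoid L}

/-- Key lemma: any functional vanishing on `T(G)` vanishes on every `α ∈ T(G')`, for a
subface `G'` of `G`. -/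
lemma key_lemma [CharZero F] [Module.Free ℤ L] [Module.Finite ℤ L]
    (hsat : ∀ (x : L) (n : ℕ), n ≠ 0 → n • x ∈ A → x ∈ A)
    (hG : IsFaceOf A G) (hG'A : IsFaceOf A G') (hsub : G' ≤ G)
    {α : ↥A → F} (hα : α ∈ TSet F A G') {n : ℕ} (c : Fin n → F) (lam : Fin n → ↥A)
    (hvan : ∀ β ∈ TSet F A G, ∑ k, c k * β (lam k) = 0) :
    ∑ k, c k * α (lam k) = 0 := by
  obtain ⟨t, ht1, htm, htn, hte⟩ := exists_unitChar_extending hsat hG'A hα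
  set d : Fin n → F := fun k => if ((lam k : L)) ∈ G then c k * t (lam k) else 0 with hd
  set μ : Fin n → L := fun k => (lam k : L) with hμ
  have hded : ∀ g : L → F, ∑ k, d k * g (μ k) = 0 := by
    apply dedekind
    intro χ hχ1 hχm hχn
    set β : ↥A → F := fun a => if ((a : L)) ∈ G then t a * χ a else 0 with hβ
    have hβT : β ∈ TSet F A G := by
      refine ⟨⟨?_, ?_⟩, ?_⟩
      · show (if ((0 : ↥A) : L) ∈ G then t ((0 : ↥A) : L) * χ ((0 : ↥A) : L) else 0) = 1
        rw [if_pos (show ((0 : ↥A) : L) ∈ G from G.zero_mem)]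
        show t 0 * χ 0 = 1
        rw [ht1, hχ1, one_mul]
      · intro a b
        show (if ((a + b : ↥A) : L) ∈ G then _ else (0 : F)) = _
        by_cases hab : ((a + b : ↥A) : L) ∈ G
        · have hmem := (face_add_mem_iff hG a.2 b.2).mp hab
          rw [if_pos hab]
          show t ((a : L) + (b : L)) * χ ((a : L) + (b : L)) = β a * β b
          rw [htm, hχm, hβ]
          simp only [if_pos hmem.1, if_pos hmem.2]
          ring
        · show (if ((a + b : ↥A) : L) ∈ G then _ else (0 : F)) = β a * β b
          rw [if_neg hab]
          by_cases ha : (a : L) ∈ G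
          · have hb : ¬ ((b : L) ∈ G) := fun hb => hab (G.add_mem ha hb)
            rw [hβ]
            simp only [if_neg hb, mul_zero]
          · rw [hβ]
            simp only [if_neg ha, zero_mul]
      · intro a
        by_cases ha : (a : L) ∈ G
        · show (if ((a : L)) ∈ G then t a * χ a else 0) ≠ 0 ↔ _
          rw [if_pos ha]
          exact iff_of_true (mul_ne_zero (htn _) (hχn _)) ha
        · show (if ((a : L)) ∈ G then t a * χ a else 0) ≠ 0 ↔ _
          rw [if_neg ha]
          simp [ha]
    have := hvan β hβT
    rw [← this]
    apply Finset.sum_congr rfl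
    intro k _
    rw [hd, hβ]
    by_cases hk : ((lam k : L)) ∈ G
    · simp only [if_pos hk]
      ring
    · simp only [if_neg hk, zero_mul, mul_zero]
  have := hded (fun x => if x ∈ G' then 1 else 0)
  rw [← this]
  apply Finset.sum_congr rfl
  intro k _
  rw [hd]
  by_cases hk' : ((lam k : L)) ∈ G'
  · have hkG : ((lam k : L)) ∈ G := hsub hk'
    simp only [hμ, if_pos hk', if_pos hkG, mul_one]
    rw [hte (lam k) hk']
  · simp only [hμ, if_neg hk', mul_zero]
    have : α (lam k) = 0 := by
      by_contra hne
      exact hk' ((hα.2 (lam k)).mp hne)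
    rw [this, mul_zero]

end Key

section RelF

variable {F : Type u} [Field F] {L : Type v} [AddCommGroup L] {A : AddSubmonoid L}

/-- The smallest face containing `l`. -/
def relF (A : AddSubmonoid L) (l : L) : AddSubmonoid L where
  carrier := {x | x ∈ A ∧ ∃ b ∈ A, ∃ n : ℕ, x + b = n • l}
  zero_mem' := ⟨A.zero_mem, 0, A.zero_mem, 0, by simp⟩
  add_mem' := by
    rintro x y ⟨hx, b, hb, n, hn⟩ ⟨hy, b', hb', n', hn'⟩
    refine ⟨A.add_mem hx hy, b + b', A.add_mem hb hb', n + n', ?_⟩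
    rw [add_smul]
    rw [← hn, ← hn']
    abel

lemma relF_isFace (A : AddSubmonoid L) (l : L) : IsFaceOf A (relF A l) := by
  refine ⟨fun x hx => hx.1, fun a ha b hb hab => ?_⟩
  obtain ⟨_, c, hc, n, hn⟩ := hab
  exact ⟨ha, b + c, A.add_mem hb hc, n, by rw [← hn]; abel⟩

lemma mem_relF_self {l : L} (hl : l ∈ A) : l ∈ relF A l :=
  ⟨hl, 0, A.zero_mem, 1, by simp⟩

lemma relF_min {G : AddSubmonoid L} (hG : IsFaceOf A G) {l : L} (hl : l ∈ G) :
    relF A l ≤ G := by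
  rintro x ⟨hx, b, hb, n, hn⟩
  apply hG.2 x hx b hb
  rw [hn]
  exact AddSubmonoid.nsmul_mem G hl n

/-- There is an element whose smallest face is all of `A`. -/
lemma exists_interior_point [Module.Free ℤ L] [Module.Finite ℤ L] (A : AddSubmonoid L) :
    ∃ l : ↥A, ∀ a : L, a ∈ A → a ∈ relF A (l : L) := by
  classical
  haveI : IsNoetherian ℤ L := inferInstance
  set S : Set (Submodule ℤ L) :=
    {N | ∃ l : ↥A, N = AddSubgroup.toIntSubmodule (AddSubgroup.closure ((relF A (l : L)) : Set L))}
    with hS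
  have hSne : S.Nonempty := ⟨_, ⟨(0 : ↥A), rfl⟩⟩
  obtain ⟨M, hM, hmax⟩ := (set_has_maximal_iff_noetherian.mpr inferInstance) S hSne
  obtain ⟨l0, rfl⟩ := hM
  refine ⟨l0, fun a ha => ?_⟩
  set l1 : ↥A := l0 + ⟨a, ha⟩ with hl1
  have hle : relF A (l0 : L) ≤ relF A (l1 : L) := by
    rintro x ⟨hx, b, hb, n, hn⟩
    refine ⟨hx, b + n • a, A.add_mem hb (AddSubmonoid.nsmul_mem A ha n), n, ?_⟩
    have : ((l1 : ↥A) : L) = (l0 : L) + a := rfl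
    rw [this, smul_add, ← hn]
    abel
  have hmem1 : a ∈ relF A (l1 : L) := by
    refine ⟨ha, (l0 : L), l0.2, 1, ?_⟩
    have : ((l1 : ↥A) : L) = (l0 : L) + a := rfl
    rw [this, one_smul]
    abel
  have hcle : AddSubgroup.toIntSubmodule (AddSubgroup.closure ((relF A (l0 : L)) : Set L))
      ≤ AddSubgroup.toIntSubmodule (AddSubgroup.closure ((relF A (l1 : L)) : Set L)) := by
    apply OrderIso.monotone
    apply AddSubgroup.closure_mono
    exact_mod_cast hle
  have heq : AddSubgroup.toIntSubmodule (AddSubgroup.closure ((relF A (l0 : L)) : Set L))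
      = AddSubgroup.toIntSubmodule (AddSubgroup.closure ((relF A (l1 : L)) : Set L)) := by
    by_contra hne
    exact hmax _ ⟨l1, rfl⟩ (lt_of_le_of_ne hcle hne)
  have hcleq : AddSubgroup.closure ((relF A (l0 : L)) : Set L)
      = AddSubgroup.closure ((relF A (l1 : L)) : Set L) :=
    (AddSubgroup.toIntSubmodule).injective heq
  have hacl : a ∈ AddSubgroup.closure ((relF A (l0 : L)) : Set L) := by
    rw [hcleq]
    exact AddSubgroup.subset_closure hmem1
  exact mem_face_of_mem_closure (relF_isFace A (l0 : L)) ha hacl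

end RelF

section Glue

variable {F : Type u} [Field F] {L : Type v} [AddCommGroup L] {A G G' : AddSubmonoid L}

lemma phiFun_apply_of_mem {γ : ↥(AddSubgroup.closure (G : Set L)) → F} {a : L}
    (hA : a ∈ A) (ha : a ∈ G) :
    PhiFun F A G γ ⟨a, hA⟩ = γ ⟨a, AddSubgroup.subset_closure ha⟩ := by
  unfold PhiFun
  exact dif_pos ha

lemma echar_mem_TSet (hG : IsFaceOf A G) : eChar F A G ∈ TSet F A G := by
  refine ⟨⟨?_, ?_⟩, ?_⟩
  · simp only [eChar]
    rw [if_pos (show ((0 : ↥A) : L) ∈ G from G.zero_mem)]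
  · intro a b
    have hiff := face_add_mem_iff hG a.2 b.2
    simp only [eChar]
    by_cases ha : (a : L) ∈ G <;> by_cases hb : (b : L) ∈ G
    · have hab : ((a + b : ↥A) : L) ∈ G := G.add_mem ha hb
      rw [if_pos hab, if_pos ha, if_pos hb, one_mul]
    · have hab : ¬ (((a + b : ↥A) : L) ∈ G) := fun h => hb (hiff.mp h).2
      rw [if_neg hab, if_neg hb, mul_zero]
    · have hab : ¬ (((a + b : ↥A) : L) ∈ G) := fun h => ha (hiff.mp h).1
      rw [if_neg hab, if_neg ha, zero_mul]
    · have hab : ¬ (((a + b : ↥A) : L) ∈ G) := fun h => ha (hiff.mp h).1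
      rw [if_neg hab, if_neg ha, zero_mul]
  · intro a
    simp only [eChar]
    by_cases h : (a : L) ∈ G <;> simp [h]

end Glue



/-- **The structure of the generalized toric monoid `Ã`.**
Let `A` be a saturated submonoid of a free `ℤ`-module of finite rank, and `F` a field of
characteristic zero.  Then:
(1) the unit group of `Ã = Hom((A,+),(F,·))` is `T(A)`, the idempotents of `Ã` are exactly the
elements `e(F')`, `F'` a face of `A`, and `Ã = T(A)·E = E·T(A)`;
(2) for every face `F'` of `A`, `T(F')` is a subgroup of `Ã` with unit `e(F')`, isomorphic to
the torus `Hom((F'−F',+),(F^×,·))` via `Φ_{F'}`, and the sets `T(F')` are exactly the orbits of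
the left multiplication action of `T(A)` on `Ã`;
(3) the Zariski closure of `T(F')` is the union of the `T(G)` over the faces `G` of `F'`; for
`λ` in the relative interior of a face `F'`, the principal open set `D(λ)` is the union of the
`T(G)` over the faces `G` of `A` containing `F'`; in particular `T(A)` is principal open and
dense in `Ã`. -/
theorem stmt_15
    (F : Type u) [Field F] [CharZero F]
    (L : Type v) [AddCommGroup L] [Module.Free ℤ L] [Module.Finite ℤ L]
    (A : AddSubmonoid L)
    (hsat : ∀ (x : L) (n : ℕ), n ≠ 0 → n • x ∈ A → x ∈ A) :
    -- (1) `T(A)` is the unit group of `Ã`: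
    ((∀ α, IsChar F A α →
        ((∃ β, IsChar F A β ∧ (fun a => α a * β a) = fun _ : ↥A => (1 : F)) ↔
          α ∈ TSet F A A)) ∧
      -- the idempotents of `Ã` are exactly the `e(F')`, `F'` a face of `A`:
      (∀ α, IsChar F A α →
        ((fun a => α a * α a) = α ↔ ∃ G : AddSubmonoid L, IsFaceOf A G ∧ α = eChar F A G)) ∧
      -- `Ã = T(A) E = E T(A)`:
      (∀ α, IsChar F A α → ∃ t ∈ TSet F A A, ∃ G : AddSubmonoid L, IsFaceOf A G ∧
        α = (fun a => t a * eChar F A G a) ∧ α = (fun a => eChar F A G a * t a))) ∧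
    -- (2) each `T(F')` is a subgroup of `Ã` with unit `e(F')`:
    ((∀ G : AddSubmonoid L, IsFaceOf A G →
        eChar F A G ∈ TSet F A G ∧
        (∀ α ∈ TSet F A G, ∀ β ∈ TSet F A G, (fun a => α a * β a) ∈ TSet F A G) ∧
        (∀ α ∈ TSet F A G, (fun a => α a * eChar F A G a) = α) ∧
        (∀ α ∈ TSet F A G, ∃ β ∈ TSet F A G, (fun a => α a * β a) = eChar F A G)) ∧
      -- `T(F')` is isomorphic to the torus `Hom((F'−F',+),(F^×,·))` via `Φ_{F'}`:
      (∀ G : AddSubmonoid L, IsFaceOf A G →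
        Set.BijOn (fun γ : {γ : ↥(AddSubgroup.closure (G : Set L)) → F // IsGrpChar F G γ} =>
            PhiFun F A G γ.1) Set.univ (TSet F A G) ∧
        (∀ γ γ' γ'' : {γ : ↥(AddSubgroup.closure (G : Set L)) → F // IsGrpChar F G γ},
          (∀ z, γ''.1 z = γ.1 z * γ'.1 z) →
          ∀ a : ↥A, PhiFun F A G γ''.1 a = PhiFun F A G γ.1 a * PhiFun F A G γ'.1 a)) ∧
      -- the `T(F')` are the orbits of the left-multiplication action of `T(A)` on `Ã`:
      (∀ G : AddSubmonoid L, IsFaceOf A G → ∀ α ∈ TSet F A G,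
        ∀ β : ↥A → F, (β ∈ TSet F A G ↔ ∃ t ∈ TSet F A A, β = fun a => t a * α a))) ∧
    -- (3) the Zariski closure of `T(F')` is the union of the `T(G)`, `G` a face of `F'`:
    ((∀ G : AddSubmonoid L, IsFaceOf A G →
        ∀ α : ↥A → F, (α ∈ ZClos F A (TSet F A G) ↔
          ∃ G' : AddSubmonoid L, IsFaceOf G G' ∧ α ∈ TSet F A G')) ∧
      -- `D(λ) = ⋃ {T(G') : G' ⊇ F'}` for `λ` in the relative interior of the face `F'`:
      (∀ (G : AddSubmonoid L) (lam : ↥A), IsFaceOf A G →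
        ((lam : L) ∈ G ∧ ∀ G' : AddSubmonoid L, IsFaceOf A G' → (lam : L) ∈ G' → G ≤ G') →
        ∀ α, IsChar F A α →
          (α lam ≠ 0 ↔ ∃ G' : AddSubmonoid L, IsFaceOf A G' ∧ G ≤ G' ∧ α ∈ TSet F A G')) ∧
      -- `T(A)` is principal open and dense in `Ã`:
      (∃ lam : ↥A, ∀ α, IsChar F A α → (α lam ≠ 0 ↔ α ∈ TSet F A A)) ∧
      (∀ α, IsChar F A α → α ∈ ZClos F A (TSet F A A))) := by
  refine ⟨⟨?_, ?_, ?_⟩, ⟨?_, ?_, ?_⟩, ⟨?_, ?_, ?_, ?_⟩⟩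
  -- (1a) units are T(A)
  · intro α hα
    constructor
    · rintro ⟨β, hβ, hprod⟩
      refine ⟨hα, fun a => iff_of_true ?_ a.2⟩
      exact left_ne_zero_of_mul_eq_one (congrFun hprod a)
    · intro hT
      refine ⟨fun a => (α a)⁻¹, ⟨?_, ?_⟩, ?_⟩
      · beta_reduce; rw [hα.1]; simp
      · intro a b; beta_reduce; rw [hα.2, mul_inv]
      · funext a; beta_reduce; exact mul_inv_cancel₀ ((hT.2 a).mpr a.2)
  -- (1b) idempotents
  · intro α hα
    constructor
    · intro hid
      refine ⟨suppM A α hα, suppM_isFace hα, ?_⟩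
      funext a
      by_cases h : (a : L) ∈ suppM A α hα
      · have hne : α a ≠ 0 := (mem_suppM_iff hα a).mp h
        have h2 : α a * α a = α a * 1 := by rw [mul_one]; exact congrFun hid a
        have h3 := mul_left_cancel₀ hne h2
        simp only [eChar, if_pos h]
        exact h3
      · have h0 : α a = 0 := by
          by_contra hne
          exact h ((mem_suppM_iff hα a).mpr hne)
        simp only [eChar, if_neg h]
        exact h0
    · rintro ⟨G, hG, rfl⟩
      funext a
      simp only [eChar]
      by_cases h : (a : L) ∈ G <;> simp [h]
  -- (1c) A~ = T(A) E
  · intro α hα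
    have hface := suppM_isFace hα
    obtain ⟨t, ht1, htm, htn, hte⟩ := exists_unitChar_extending hsat hface (mem_TSet_suppM hα)
    refine ⟨fun a => t a, ⟨⟨?_, ?_⟩, fun a => iff_of_true (htn _) a.2⟩,
      suppM A α hα, hface, ?_, ?_⟩
    · show t ((0 : ↥A) : L) = 1
      rw [show ((0 : ↥A) : L) = 0 from rfl, ht1]
    · intro a b
      exact htm _ _
    · funext a
      by_cases h : (a : L) ∈ suppM A α hα
      · simp only [eChar, if_pos h, mul_one]
        exact (hte a h).symm
      · simp only [eChar, if_neg h, mul_zero]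
        by_contra hne
        exact h ((mem_suppM_iff hα a).mpr hne)
    · funext a
      by_cases h : (a : L) ∈ suppM A α hα
      · simp only [eChar, if_pos h, one_mul]
        exact (hte a h).symm
      · simp only [eChar, if_neg h, zero_mul]
        by_contra hne
        exact h ((mem_suppM_iff hα a).mpr hne)
  -- (2a) T(G) subgroup with unit e(G)
  · intro G hG
    refine ⟨echar_mem_TSet hG, ?_, ?_, ?_⟩
    · intro α hαT β hβT
      refine ⟨⟨?_, ?_⟩, ?_⟩
      · show α 0 * β 0 = 1
        rw [hαT.1.1, hβT.1.1, one_mul]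
      · intro a b
        show α (a + b) * β (a + b) = _
        rw [hαT.1.2, hβT.1.2]; ring
      · intro a
        show α a * β a ≠ 0 ↔ _
        rw [mul_ne_zero_iff]
        exact ⟨fun h => (hαT.2 a).mp h.1, fun h => ⟨(hαT.2 a).mpr h, (hβT.2 a).mpr h⟩⟩
    · intro α hαT
      funext a
      by_cases h : (a : L) ∈ G
      · simp only [eChar, if_pos h, mul_one]
      · have h0 : α a = 0 := by
          by_contra hne; exact h ((hαT.2 a).mp hne)
        simp only [eChar, if_neg h, mul_zero]
        exact h0.symm
    · intro α hαT
      refine ⟨fun a => if (a : L) ∈ G then (α a)⁻¹ else 0, ⟨⟨?_, ?_⟩, ?_⟩, ?_⟩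
      · beta_reduce
        rw [if_pos (show ((0 : ↥A) : L) ∈ G from G.zero_mem), hαT.1.1]; simp
      · intro a b
        beta_reduce
        have hiff := face_add_mem_iff hG a.2 b.2
        by_cases ha : (a : L) ∈ G <;> by_cases hb : (b : L) ∈ G
        · have hab : ((a + b : ↥A) : L) ∈ G := G.add_mem ha hb
          rw [if_pos hab, if_pos ha, if_pos hb, hαT.1.2, mul_inv]
        · have hab : ¬ (((a + b : ↥A) : L) ∈ G) := fun h => hb (hiff.mp h).2
          rw [if_neg hab, if_neg hb, mul_zero]
        · have hab : ¬ (((a + b : ↥A) : L) ∈ G) := fun h => ha (hiff.mp h).1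
          rw [if_neg hab, if_neg ha, zero_mul]
        · have hab : ¬ (((a + b : ↥A) : L) ∈ G) := fun h => ha (hiff.mp h).1
          rw [if_neg hab, if_neg ha, zero_mul]
      · intro a
        beta_reduce
        by_cases h : (a : L) ∈ G
        · rw [if_pos h]
          exact iff_of_true (inv_ne_zero ((hαT.2 a).mpr h)) h
        · rw [if_neg h]
          simp [h]
      · funext a
        beta_reduce
        by_cases h : (a : L) ∈ G
        · rw [if_pos h]
          simp only [eChar, if_pos h]
          exact mul_inv_cancel₀ ((hαT.2 a).mpr h)
        · rw [if_neg h]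
          simp only [eChar, if_neg h, mul_zero]
  -- (2b) Phi is a bijection onto T(G), and multiplicative
  · intro G hG
    constructor
    · refine ⟨fun γ _ => phi_mem_TSet hG γ.2, ?_, ?_⟩
      · intro γ _ γ' _ h
        apply Subtype.ext
        funext z
        obtain ⟨a, ha, b, hb, he⟩ := exists_sub_of_mem_closure z.2
        rw [grpChar_eq_ratio γ.2 z ha hb he, grpChar_eq_ratio γ'.2 z ha hb he]
        have hva : γ.1 ⟨a, AddSubgroup.subset_closure ha⟩
            = γ'.1 ⟨a, AddSubgroup.subset_closure ha⟩ := by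
          have h1 : PhiFun F A G γ.1 ⟨a, hG.1 ha⟩ = PhiFun F A G γ'.1 ⟨a, hG.1 ha⟩ :=
            congrFun h ⟨a, hG.1 ha⟩
          rw [phiFun_apply_of_mem (hG.1 ha) ha, phiFun_apply_of_mem (hG.1 ha) ha] at h1
          exact h1
        have hvb : γ.1 ⟨b, AddSubgroup.subset_closure hb⟩
            = γ'.1 ⟨b, AddSubgroup.subset_closure hb⟩ := by
          have h1 : PhiFun F A G γ.1 ⟨b, hG.1 hb⟩ = PhiFun F A G γ'.1 ⟨b, hG.1 hb⟩ :=
            congrFun h ⟨b, hG.1 hb⟩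
          rw [phiFun_apply_of_mem (hG.1 hb) hb, phiFun_apply_of_mem (hG.1 hb) hb] at h1
          exact h1
        rw [hva, hvb]
      · intro α hαT
        obtain ⟨γ, hγ, hphi⟩ := exists_grpChar hG hαT
        exact ⟨⟨γ, hγ⟩, Set.mem_univ _, hphi⟩
    · intro γ γ' γ'' hz a
      unfold PhiFun
      by_cases h : (a : L) ∈ G
      · rw [dif_pos h, dif_pos h, dif_pos h, hz]
      · rw [dif_neg h, dif_neg h, dif_neg h, mul_zero]
  -- (2c) orbits
  · intro G hG α hαT β
    constructor
    · intro hβT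
      obtain ⟨tb, htb1, htbm, htbn, htbe⟩ := exists_unitChar_extending hsat hG hβT
      obtain ⟨ta, hta1, htam, htan, htae⟩ := exists_unitChar_extending hsat hG hαT
      refine ⟨fun a => tb a * (ta a)⁻¹, ⟨⟨?_, ?_⟩,
        fun a => iff_of_true (mul_ne_zero (htbn _) (inv_ne_zero (htan _))) a.2⟩, ?_⟩
      · show tb ((0 : ↥A) : L) * (ta ((0 : ↥A) : L))⁻¹ = 1
        rw [show ((0 : ↥A) : L) = 0 from rfl, htb1, hta1]; simp
      · intro a b
        show tb ((a + b : ↥A) : L) * (ta ((a + b : ↥A) : L))⁻¹ = _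
        rw [show ((a + b : ↥A) : L) = (a : L) + (b : L) from rfl, htbm, htam, mul_inv]
        ring
      · funext a
        by_cases h : (a : L) ∈ G
        · show β a = tb (a : L) * (ta (a : L))⁻¹ * α a
          rw [htbe a h, htae a h]
          have hαne : α a ≠ 0 := (hαT.2 a).mpr h
          rw [mul_assoc, inv_mul_cancel₀ hαne, mul_one]
        · have hβ0 : β a = 0 := by by_contra hne; exact h ((hβT.2 a).mp hne)
          have hα0 : α a = 0 := by by_contra hne; exact h ((hαT.2 a).mp hne)
          show β a = _ * α a
          rw [hβ0, hα0, mul_zero]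
    · rintro ⟨t, htT, rfl⟩
      refine ⟨⟨?_, ?_⟩, ?_⟩
      · show t 0 * α 0 = 1
        rw [htT.1.1, hαT.1.1, one_mul]
      · intro a b
        show t (a + b) * α (a + b) = _
        rw [htT.1.2, hαT.1.2]; ring
      · intro a
        show t a * α a ≠ 0 ↔ _
        rw [mul_ne_zero_iff]
        exact ⟨fun hh => (hαT.2 a).mp hh.2, fun hh => ⟨(htT.2 a).mpr a.2, (hαT.2 a).mpr hh⟩⟩
  -- (3a) Zariski closure of T(G)
  · intro G hG α
    constructor
    · intro hZ
      have hα := hZ.1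
      refine ⟨suppM A α hα, ⟨?_, fun a haG b hbG hab =>
        (suppM_isFace hα).2 a (hG.1 haG) b (hG.1 hbG) hab⟩, mem_TSet_suppM hα⟩
      intro x hx
      obtain ⟨hxA, hne⟩ := hx
      by_contra hxG
      have hvan : ∀ β ∈ TSet F A G,
          ∑ k : Fin 1, (fun _ : Fin 1 => (1 : F)) k * β ((fun _ : Fin 1 => (⟨x, hxA⟩ : ↥A)) k)
            = 0 := by
        intro β hβT
        have hβ0 : β ⟨x, hxA⟩ = 0 := by
          by_contra hne2
          exact hxG ((hβT.2 ⟨x, hxA⟩).mp hne2)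
        simp [hβ0]
      have h0 := hZ.2 1 (fun _ => 1) (fun _ => ⟨x, hxA⟩) hvan
      simp at h0
      exact hne h0
    · rintro ⟨G', hG', hαT⟩
      exact ⟨hαT.1, fun n c lam hvan =>
        key_lemma hsat hG (face_trans hG hG') hG'.1 hαT c lam hvan⟩
  -- (3b) principal open sets
  · intro G lam0 hG hmin α hα
    constructor
    · intro hne
      refine ⟨suppM A α hα, suppM_isFace hα, ?_, mem_TSet_suppM hα⟩
      exact hmin.2 _ (suppM_isFace hα) ((mem_suppM_iff hα lam0).mpr hne)
    · rintro ⟨G', hG', hle, hαT⟩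
      exact (hαT.2 lam0).mpr (hle hmin.1)
  -- (3c) T(A) principal open
  · obtain ⟨l0, hl0⟩ := exists_interior_point A
    refine ⟨l0, fun α hα => ?_⟩
    constructor
    · intro hne
      refine ⟨hα, fun a => iff_of_true ?_ a.2⟩
      have hmem : (a : L) ∈ relF A (l0 : L) := hl0 a a.2
      have hsup : relF A (l0 : L) ≤ suppM A α hα :=
        relF_min (suppM_isFace hα) ((mem_suppM_iff hα l0).mpr hne)
      exact (mem_suppM_iff hα a).mp (hsup hmem)
    · intro hT
      exact (hT.2 l0).mpr l0.2
  -- (3d) T(A) dense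
  · intro α hα
    exact ⟨hα, fun n c lam hvan =>
      key_lemma hsat (face_self A) (suppM_isFace hα) (fun x hx => hx.1)
        (mem_TSet_suppM hα) c lam hvan⟩
end
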